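/- arXiv:2002.02647 — 7 statements merged into one kernel-verified Lean document; each statement's English description precedes it below -/
import Mathlib

section
/- Let (C,‖·|) be a normed cone and φ : C → ℝ a linear functional. The following are equivalent: (i) φ is upper semicontinuous for the forward topology of the extended quasi-metric d_e induced by the conic norm; (ii) φ is semi-Lipschitz on (C, d_e); (iii) there exists M ≥ 0 such that φ(x) ≤ M‖x| for all x ∈ C. -/
open scoped NNReal ENNReal

/-- The extended quasi-metric induced by a conic norm on a cone. -/
noncomputable def coneQuasiDist {C : Type*} [AddCommMonoid C] (n : C → ℝ) (x y : C) : ℝ≥0∞ :=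
  sInf {e : ℝ≥0∞ | ∃ z : C, y = x + z ∧ e = ENNReal.ofReal (n z)}

/-- The forward topology of the extended quasi-metric induced by a conic norm. -/
def forwardTop {C : Type*} [AddCommMonoid C] (n : C → ℝ) : TopologicalSpace C :=
  TopologicalSpace.generateFrom
    {B | ∃ (x : C) (r : ℝ≥0∞), 0 < r ∧ B = {y | coneQuasiDist n x y < r}}

lemma coneQuasiDist_le {C : Type*} [AddCommMonoid C] (n : C → ℝ) (x z : C) :
    coneQuasiDist n x (x + z) ≤ ENNReal.ofReal (n z) :=
  sInf_le ⟨z, rfl, rfl⟩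

lemma coneQuasiDist_self {C : Type*} [AddCommMonoid C] (n : C → ℝ) (hz : n 0 = 0) (x : C) :
    coneQuasiDist n x x = 0 := by
  refine le_antisymm ?_ (by simp)
  have := coneQuasiDist_le n x 0
  simpa [hz] using this

lemma coneQuasiDist_triangle {C : Type*} [AddCommMonoid C] (n : C → ℝ)
    (hnn : ∀ x, 0 ≤ n x) (hadd : ∀ x y, n (x + y) ≤ n x + n y) (x y w : C) :
    coneQuasiDist n x w ≤ coneQuasiDist n x y + coneQuasiDist n y w := by
  rw [coneQuasiDist, coneQuasiDist, ENNReal.sInf_add]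
  simp only [le_iInf_iff]
  rintro e ⟨z1, rfl, rfl⟩
  rw [add_comm, coneQuasiDist, ENNReal.sInf_add]
  simp only [le_iInf_iff]
  rintro e ⟨z2, rfl, rfl⟩
  calc sInf {e : ℝ≥0∞ | ∃ z : C, x + z1 + z2 = x + z ∧ e = ENNReal.ofReal (n z)}
      = coneQuasiDist n x (x + (z1 + z2)) := by rw [coneQuasiDist, add_assoc]
    _ ≤ ENNReal.ofReal (n (z1 + z2)) := coneQuasiDist_le n x _
    _ ≤ ENNReal.ofReal (n z1 + n z2) := ENNReal.ofReal_le_ofReal (hadd z1 z2)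
    _ = ENNReal.ofReal (n z2) + ENNReal.ofReal (n z1) := by
        rw [ENNReal.ofReal_add (hnn z1) (hnn z2), add_comm]

/-- Every open set of the forward topology contains a forward ball around each point. -/
lemma forwardTop_exists_ball {C : Type*} [AddCommMonoid C] (n : C → ℝ)
    (hnn : ∀ x, 0 ≤ n x) (hadd : ∀ x y, n (x + y) ≤ n x + n y)
    (V : Set C) (hV : TopologicalSpace.GenerateOpen
      {B | ∃ (x : C) (r : ℝ≥0∞), 0 < r ∧ B = {y | coneQuasiDist n x y < r}} V) :
    ∀ x ∈ V, ∃ r : ℝ≥0∞, 0 < r ∧ ∀ y, coneQuasiDist n x y < r → y ∈ V := by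
  induction hV with
  | basic B hB =>
    obtain ⟨x0, r0, hr0, rfl⟩ := hB
    intro x hx
    have hd : coneQuasiDist n x0 x < r0 := hx
    refine ⟨r0 - coneQuasiDist n x0 x, tsub_pos_iff_lt.mpr hd, fun y hy => ?_⟩
    have hne : coneQuasiDist n x0 x ≠ ⊤ := (hd.trans_le le_top).ne
    have : coneQuasiDist n x0 y ≤ coneQuasiDist n x0 x + coneQuasiDist n x y :=
      coneQuasiDist_triangle n hnn hadd x0 x y
    calc coneQuasiDist n x0 y ≤ coneQuasiDist n x0 x + coneQuasiDist n x y := this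
      _ < coneQuasiDist n x0 x + (r0 - coneQuasiDist n x0 x) :=
          (ENNReal.add_lt_add_left hne hy)
      _ = r0 := add_tsub_cancel_of_le hd.le
  | univ => exact fun x _ => ⟨1, one_pos, fun y _ => trivial⟩
  | inter s t _ _ ihs iht =>
    intro x hx
    obtain ⟨r1, hr1, h1⟩ := ihs x hx.1
    obtain ⟨r2, hr2, h2⟩ := iht x hx.2
    exact ⟨min r1 r2, lt_min hr1 hr2, fun y hy =>
      ⟨h1 y (hy.trans_le (min_le_left _ _)), h2 y (hy.trans_le (min_le_right _ _))⟩⟩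
  | sUnion S _ ih =>
    rintro x ⟨s, hs, hxs⟩
    obtain ⟨r, hr, h⟩ := ih s hs x hxs
    exact ⟨r, hr, fun y hy => ⟨s, hs, h y hy⟩⟩

/-- For a linear functional `φ` on a normed cone, the following are equivalent:
(i) `φ` is upper semicontinuous for the forward topology of `d_e`;
(ii) `φ` is semi-Lipschitz on `(C, d_e)`;
(iii) `φ x ≤ M * ‖x|` for some `M ≥ 0` and all `x`. -/
theorem linear_functional_usc_iff_semiLipschitz_iff_bounded
    {C : Type*} [AddCommMonoid C] [Module ℝ≥0 C] (n : C → ℝ)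
    (hnn : ∀ x, 0 ≤ n x)
    (hadd : ∀ x y, n (x + y) ≤ n x + n y)
    (hzero : ∀ x, n x = 0 ↔ x = 0)
    (hsmul : ∀ (r : ℝ≥0) (x : C), n (r • x) = (r : ℝ) * n x)
    (φ : C → ℝ)
    (hφadd : ∀ x y, φ (x + y) = φ x + φ y)
    (hφsmul : ∀ (r : ℝ≥0) (x : C), φ (r • x) = (r : ℝ) * φ x) :
    ((@UpperSemicontinuous C ℝ (forwardTop n) _ φ) ↔
      (∃ L : ℝ≥0, ∀ x y : C,
        ENNReal.ofReal (φ x - φ y) ≤ (L : ℝ≥0∞) * coneQuasiDist n y x)) ∧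
    ((∃ L : ℝ≥0, ∀ x y : C,
        ENNReal.ofReal (φ x - φ y) ≤ (L : ℝ≥0∞) * coneQuasiDist n y x) ↔
      (∃ M : ℝ, 0 ≤ M ∧ ∀ x : C, φ x ≤ M * n x)) := by
  have hn0 : n 0 = 0 := (hzero 0).mpr rfl
  have hφ0 : φ 0 = 0 := by
    have := hφsmul 0 0
    simpa using this
  -- (iii) → (ii)
  have bdd_to_lip : (∃ M : ℝ, 0 ≤ M ∧ ∀ x : C, φ x ≤ M * n x) →
      (∃ L : ℝ≥0, ∀ x y : C,
        ENNReal.ofReal (φ x - φ y) ≤ (L : ℝ≥0∞) * coneQuasiDist n y x) := by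
    rintro ⟨M, hM0, hM⟩
    refine ⟨M.toNNReal + 1, fun x y => ?_⟩
    set L : ℝ≥0 := M.toNNReal + 1 with hL
    have hL0 : (L : ℝ≥0∞) ≠ 0 := by simp [hL]
    have hLt : (L : ℝ≥0∞) ≠ ⊤ := ENNReal.coe_ne_top
    rw [mul_comm, ← ENNReal.div_le_iff_le_mul (Or.inl hL0) (Or.inl hLt), coneQuasiDist]
    refine le_sInf ?_
    rintro e ⟨z, rfl, rfl⟩
    · rw [ENNReal.div_le_iff_le_mul (Or.inl hL0) (Or.inl hLt)]
      have h1 : φ (y + z) - φ y = φ z := by rw [hφadd]; ring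
      have h2 : φ z ≤ (L : ℝ) * n z := by
        calc φ z ≤ M * n z := hM z
          _ ≤ (L : ℝ) * n z := by
            apply mul_le_mul_of_nonneg_right _ (hnn z)
            simp [hL, Real.coe_toNNReal M hM0]
      calc ENNReal.ofReal (φ (y + z) - φ y) = ENNReal.ofReal (φ z) := by rw [h1]
        _ ≤ ENNReal.ofReal ((L : ℝ) * n z) := ENNReal.ofReal_le_ofReal h2
        _ = ENNReal.ofReal (n z) * (L : ℝ≥0∞) := by
            rw [ENNReal.ofReal_mul L.coe_nonneg, mul_comm, ENNReal.ofReal_coe_nnreal]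
  -- (ii) → (iii)
  have lip_to_bdd : (∃ L : ℝ≥0, ∀ x y : C,
        ENNReal.ofReal (φ x - φ y) ≤ (L : ℝ≥0∞) * coneQuasiDist n y x) →
      (∃ M : ℝ, 0 ≤ M ∧ ∀ x : C, φ x ≤ M * n x) := by
    rintro ⟨L, hL⟩
    refine ⟨L, L.coe_nonneg, fun x => ?_⟩
    rcases le_or_gt (φ x) 0 with h | h
    · exact h.trans (mul_nonneg L.coe_nonneg (hnn x))
    have hd : coneQuasiDist n 0 x ≤ ENNReal.ofReal (n x) := by
      simpa using coneQuasiDist_le n 0 x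
    have := hL x 0
    rw [hφ0, sub_zero] at this
    have key : ENNReal.ofReal (φ x) ≤ ENNReal.ofReal ((L : ℝ) * n x) := by
      calc ENNReal.ofReal (φ x) ≤ (L : ℝ≥0∞) * coneQuasiDist n 0 x := this
        _ ≤ (L : ℝ≥0∞) * ENNReal.ofReal (n x) := mul_le_mul_right hd _
        _ = ENNReal.ofReal ((L : ℝ) * n x) := by
            rw [ENNReal.ofReal_mul L.coe_nonneg, ENNReal.ofReal_coe_nnreal]
    exact (ENNReal.ofReal_le_ofReal_iff (mul_nonneg L.coe_nonneg (hnn x))).mp key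
  -- (ii) → (i)
  have lip_to_usc : (∃ L : ℝ≥0, ∀ x y : C,
        ENNReal.ofReal (φ x - φ y) ≤ (L : ℝ≥0∞) * coneQuasiDist n y x) →
      (@UpperSemicontinuous C ℝ (forwardTop n) _ φ) := by
    rintro ⟨L, hL⟩
    letI := forwardTop n
    intro x t ht
    set L' : ℝ≥0 := L + 1 with hL'def
    have hL' : ∀ a b : C, ENNReal.ofReal (φ a - φ b) ≤ (L' : ℝ≥0∞) * coneQuasiDist n b a :=
      fun a b => (hL a b).trans (mul_le_mul_left (by simp [hL'def]) _)
    have hL'0 : (L' : ℝ≥0∞) ≠ 0 := by simp [hL'def]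
    have hL'pos : (0 : ℝ) < (L' : ℝ) := by rw [hL'def]; push_cast; positivity
    set r : ℝ≥0∞ := ENNReal.ofReal ((t - φ x) / (L' : ℝ)) with hrdef
    have hr : 0 < r := ENNReal.ofReal_pos.mpr (div_pos (by linarith) hL'pos)
    have hopen : IsOpen {y | coneQuasiDist n x y < r} :=
      TopologicalSpace.GenerateOpen.basic _ ⟨x, r, hr, rfl⟩
    have hmem : x ∈ {y | coneQuasiDist n x y < r} := by
      simpa [coneQuasiDist_self n hn0 x] using hr
    filter_upwards [hopen.mem_nhds hmem] with y hy
    have h1 : ENNReal.ofReal (φ y - φ x) < (L' : ℝ≥0∞) * r := by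
      calc ENNReal.ofReal (φ y - φ x) ≤ (L' : ℝ≥0∞) * coneQuasiDist n x y := hL' y x
        _ < (L' : ℝ≥0∞) * r := ENNReal.mul_lt_mul_right hL'0 ENNReal.coe_ne_top hy
    have h2 : (L' : ℝ≥0∞) * r = ENNReal.ofReal (t - φ x) := by
      rw [hrdef, ← ENNReal.ofReal_coe_nnreal, ← ENNReal.ofReal_mul L'.coe_nonneg,
        mul_div_cancel₀ _ (ne_of_gt hL'pos)]
    rw [h2] at h1
    have := (ENNReal.ofReal_lt_ofReal_iff (by linarith)).mp h1
    linarith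
  -- (i) → (iii)
  have usc_to_bdd : (@UpperSemicontinuous C ℝ (forwardTop n) _ φ) →
      (∃ M : ℝ, 0 ≤ M ∧ ∀ x : C, φ x ≤ M * n x) := by
    intro h
    letI := forwardTop n
    have h0 : ∀ᶠ y in nhds (0 : C), φ y < 1 := h 0 1 (by show φ 0 < 1; rw [hφ0]; norm_num)
    obtain ⟨U, hU, hUsub⟩ := h0.exists_mem
    obtain ⟨V, hVU, hVopen, hV0⟩ := mem_nhds_iff.mp hU
    obtain ⟨r, hr, hball⟩ := forwardTop_exists_ball n hnn hadd V hVopen 0 hV0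
    obtain ⟨δ, _, hδ0, hδr⟩ := ENNReal.lt_iff_exists_real_btwn.mp hr
    have hδpos : 0 < δ := ENNReal.ofReal_pos.mp hδ0
    have hsmall : ∀ w : C, n w < δ → φ w < 1 := by
      intro w hw
      have hd : coneQuasiDist n 0 w ≤ ENNReal.ofReal (n w) := by
        simpa using coneQuasiDist_le n 0 w
      have : coneQuasiDist n 0 w < r :=
        lt_of_le_of_lt hd (lt_of_lt_of_le ((ENNReal.ofReal_lt_ofReal_iff hδpos).mpr hw) hδr.le)
      exact hUsub w (hVU (hball w this))
    refine ⟨2 / δ, by positivity, fun x => ?_⟩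
    rcases eq_or_lt_of_le (hnn x) with hx0 | hxpos
    · have hx : x = 0 := (hzero x).mp hx0.symm
      rw [hx, hφ0, hn0, mul_zero]
    · set c : ℝ := δ / (2 * n x) with hcdef
      have hcpos : 0 < c := by positivity
      set rc : ℝ≥0 := ⟨c, hcpos.le⟩ with hrc
      have hcoe : (rc : ℝ) = c := rfl
      have hnrx : n (rc • x) = c * n x := by rw [hsmul, hcoe]
      have hlt : n (rc • x) < δ := by
        rw [hnrx, hcdef]
        rw [div_mul_eq_mul_div, mul_comm 2 (n x), mul_div_assoc]
        have : n x / (n x * 2) = 1/2 := by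
          field_simp
        rw [this]
        linarith
      have := hsmall _ hlt
      rw [hφsmul, hcoe] at this
      -- c * φ x < 1, c = δ / (2 * n x)
      have h1 : φ x < 1 / c := (lt_div_iff₀ hcpos).mpr (by linarith [this])
      have h2 : 1 / c = 2 / δ * n x := by
        rw [hcdef, one_div_div]
        ring
      rw [h2] at h1
      linarith
  exact ⟨⟨fun h => bdd_to_lip (usc_to_bdd h), lip_to_usc⟩, ⟨lip_to_bdd, bdd_to_lip⟩⟩
end

section
/- Let (C,‖·|) be a normed cone and φ : C → ℝ a linear functional with φ(x) ≤ M‖x| for some M ≥ 0. Then the dual conic norm ‖φ|* = sup_{‖x|≤1} φ(x) equals the semi-Lipschitz constant ‖φ|_S of φ with respect to the extended quasi-metric d_e(x,y) = inf{‖z| : y = x+z}. -/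
open scoped NNReal ENNReal

/-- For a bounded linear functional on a normed cone, the dual conic norm
equals the semi-Lipschitz constant with respect to the induced extended
quasi-metric `d_e`. -/
theorem dual_conic_norm_eq_semiLipschitz_const {C : Type*} [AddCommMonoid C] [Module ℝ≥0 C]
    (n : C → ℝ)
    (hnn : ∀ x, 0 ≤ n x)
    (hadd : ∀ x y, n (x + y) ≤ n x + n y)
    (hzero : ∀ x, n x = 0 ↔ x = 0)
    (hsmul : ∀ (r : ℝ≥0) (x : C), n (r • x) = (r : ℝ) * n x)
    (φ : C → ℝ)
    (hφadd : ∀ x y, φ (x + y) = φ x + φ y)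
    (hφsmul : ∀ (r : ℝ≥0) (x : C), φ (r • x) = (r : ℝ) * φ x)
    (M : ℝ) (hM : 0 ≤ M) (hbd : ∀ x, φ x ≤ M * n x) :
    sSup {r : ℝ | ∃ x : C, n x ≤ 1 ∧ r = φ x} =
      sInf {L : ℝ | 0 < L ∧ ∀ x y : C,
        ENNReal.ofReal (φ x - φ y) ≤ ENNReal.ofReal L * coneQuasiDist n y x} := by
  have hφ0 : φ 0 = 0 := by
    have := hφadd 0 0
    simp only [add_zero] at this
    linarith
  have hn0 : n 0 = 0 := (hzero 0).mpr rfl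
  -- characterize the semi-Lipschitz condition
  have key : ∀ L : ℝ, 0 < L →
      ((∀ x y : C, ENNReal.ofReal (φ x - φ y) ≤
          ENNReal.ofReal L * coneQuasiDist n y x) ↔ ∀ z : C, φ z ≤ L * n z) := by
    intro L hL
    have hL0 : ENNReal.ofReal L ≠ 0 := ne_of_gt (ENNReal.ofReal_pos.mpr hL)
    have hLt : ENNReal.ofReal L ≠ ∞ := ENNReal.ofReal_ne_top
    constructor
    · intro h z
      have hd : coneQuasiDist n 0 z ≤ ENNReal.ofReal (n z) :=
        sInf_le ⟨z, (zero_add z).symm, rfl⟩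
      have h1 : ENNReal.ofReal (φ z) ≤ ENNReal.ofReal (L * n z) := by
        have := (h z 0).trans (mul_le_mul_right hd _)
        rw [hφ0, sub_zero] at this
        rwa [ENNReal.ofReal_mul hL.le]
      by_cases hz : φ z ≤ 0
      · exact hz.trans (mul_nonneg hL.le (hnn z))
      · exact (ENNReal.ofReal_le_ofReal_iff (mul_nonneg hL.le (hnn z))).mp h1
    · intro h x y
      rcases eq_or_ne (coneQuasiDist n y x) ∞ with hd | hd
      · rw [hd, ENNReal.mul_top hL0]; exact le_top
      rw [mul_comm, ← ENNReal.div_le_iff_le_mul (Or.inl hL0) (Or.inl hLt)]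
      refine le_sInf ?_
      rintro e ⟨z, rfl, rfl⟩
      rw [ENNReal.div_le_iff_le_mul (Or.inl hL0) (Or.inl hLt)]
      have hphi : φ (y + z) - φ y = φ z := by rw [hφadd]; ring
      rw [hphi]
      calc ENNReal.ofReal (φ z) ≤ ENNReal.ofReal (L * n z) :=
            ENNReal.ofReal_le_ofReal (h z)
        _ = ENNReal.ofReal (n z) * ENNReal.ofReal L := by
            rw [ENNReal.ofReal_mul hL.le, mul_comm]
  set S := {r : ℝ | ∃ x : C, n x ≤ 1 ∧ r = φ x} with hS
  set T := {L : ℝ | 0 < L ∧ ∀ x y : C,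
      ENNReal.ofReal (φ x - φ y) ≤ ENNReal.ofReal L * coneQuasiDist n y x} with hT
  have hSne : S.Nonempty := ⟨0, 0, by simp [hn0], hφ0.symm⟩
  have hSbdd : BddAbove S := by
    refine ⟨M, ?_⟩
    rintro r ⟨x, hx1, rfl⟩
    calc φ x ≤ M * n x := hbd x
      _ ≤ M * 1 := by nlinarith
      _ = M := mul_one M
  have hA0 : 0 ≤ sSup S := le_csSup hSbdd ⟨0, by simp [hn0], hφ0.symm⟩
  -- sup ≤ every element of T
  have hTlb : ∀ L ∈ T, sSup S ≤ L := by
    rintro L ⟨hL, h⟩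
    refine csSup_le hSne ?_
    rintro r ⟨x, hx1, rfl⟩
    calc φ x ≤ L * n x := ((key L hL).mp h) x
      _ ≤ L * 1 := by nlinarith
      _ = L := mul_one L
  -- for ε > 0, sSup S + ε ∈ T
  have hmem : ∀ ε : ℝ, 0 < ε → sSup S + ε ∈ T := by
    intro ε hε
    have hpos : 0 < sSup S + ε := by linarith
    refine ⟨hpos, (key _ hpos).mpr ?_⟩
    intro z
    rcases eq_or_lt_of_le (hnn z) with hz0 | hz0
    · have : z = 0 := (hzero z).mp hz0.symm
      simp [this, hφ0, hn0]
    · set r : ℝ≥0 := ⟨(n z)⁻¹, by positivity⟩ with hr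
      have hnr : n (r • z) ≤ 1 := by
        rw [hsmul]
        simp only [hr, NNReal.coe_mk]
        change (n z)⁻¹ * n z ≤ 1
        rw [inv_mul_cancel₀ hz0.ne']
      have hle : φ (r • z) ≤ sSup S := le_csSup hSbdd ⟨r • z, hnr, rfl⟩
      rw [hφsmul] at hle
      simp only [hr, NNReal.coe_mk] at hle
      have : φ z ≤ sSup S * n z := by
        change (n z)⁻¹ * φ z ≤ sSup S at hle
        rw [inv_mul_le_iff₀ hz0] at hle
        linarith [hle]
      nlinarith
  have hTne : T.Nonempty := ⟨sSup S + 1, hmem 1 one_pos⟩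
  have hTbdd : BddBelow T := ⟨sSup S, fun L hL => hTlb L hL⟩
  refine le_antisymm (le_csInf hTne hTlb) ?_
  refine le_of_forall_pos_le_add ?_
  intro ε hε
  exact csInf_le hTbdd (hmem ε hε)
end

section
/- Let (X,‖·|) be a finite-dimensional asymmetric normed space (whose induced topology is T₁). Then there exists M > 0 such that ‖-x| ≤ M‖x| for all x ∈ X; consequently, for every continuous linear functional φ on X, -φ is also continuous and ‖-φ|* ≤ M‖φ|*, so the dual cone X* is a linear space. -/
private lemma asym_n_zero {X : Type*} [AddCommGroup X] (n : X → ℝ)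
    (hzero : ∀ x, n x = 0 ↔ x = 0) : n 0 = 0 := (hzero 0).mpr rfl

private lemma asym_sum_le {X : Type*} [AddCommGroup X] (n : X → ℝ)
    (h0 : n 0 = 0) (hadd : ∀ x y, n (x + y) ≤ n x + n y)
    {ι : Type*} (s : Finset ι) (f : ι → X) :
    n (∑ i ∈ s, f i) ≤ ∑ i ∈ s, n (f i) := by
  induction s using Finset.cons_induction with
  | empty => simp [h0]
  | cons a s ha ih =>
    simp only [Finset.sum_cons]
    exact (hadd _ _).trans (by linarith)

private lemma asym_smul_le {X : Type*} [AddCommGroup X] [Module ℝ X] (n : X → ℝ)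
    (hnn : ∀ x, 0 ≤ n x) (h0 : n 0 = 0)
    (hsmul : ∀ (r : ℝ), 0 < r → ∀ x, n (r • x) = r * n x)
    (c : ℝ) (x : X) : n (c • x) ≤ |c| * (n x + n (-x)) := by
  rcases lt_trichotomy c 0 with hc | hc | hc
  · have h1 : c • x = (-c) • (-x) := by rw [neg_smul, smul_neg, neg_neg]
    rw [h1, hsmul _ (neg_pos.mpr hc), abs_of_neg hc]
    nlinarith [hnn x, hnn (-x)]
  · subst hc; simp only [zero_smul, h0, abs_zero]
    nlinarith [hnn x, hnn (-x)]
  · rw [hsmul _ hc, abs_of_pos hc]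
    nlinarith [hnn x, hnn (-x)]

/-- Functional consequence of the reverse bound. -/
private lemma asym_dual {X : Type*} [AddCommGroup X] [Module ℝ X] (n : X → ℝ)
    (hnn : ∀ x, 0 ≤ n x)
    (hsmul : ∀ (r : ℝ), 0 < r → ∀ x, n (r • x) = r * n x)
    (h0 : n 0 = 0) {M : ℝ} (hM : 0 < M) (hrev : ∀ x, n (-x) ≤ M * n x)
    (φ : X →ₗ[ℝ] ℝ) (hφ : ∃ K : ℝ, 0 ≤ K ∧ ∀ x, φ x ≤ K * n x) :
    (∃ K : ℝ, 0 ≤ K ∧ ∀ x, -φ x ≤ K * n x) ∧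
      sSup {r : ℝ | ∃ x : X, n x ≤ 1 ∧ r = -φ x} ≤
        M * sSup {r : ℝ | ∃ x : X, n x ≤ 1 ∧ r = φ x} := by
  obtain ⟨K, hK0, hK⟩ := hφ
  constructor
  · refine ⟨K * M, by positivity, fun x => ?_⟩
    have h1 : φ (-x) ≤ K * n (-x) := hK (-x)
    have h2 : n (-x) ≤ M * n x := hrev x
    have h3 : φ (-x) = -φ x := map_neg φ x
    nlinarith [hnn x]
  · set s : Set ℝ := {r : ℝ | ∃ x : X, n x ≤ 1 ∧ r = φ x} with hs
    have h0s : (0 : ℝ) ∈ s := ⟨0, by simp [h0], by simp⟩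
    have hbdd : BddAbove s := by
      refine ⟨K, fun r hr => ?_⟩
      obtain ⟨x, hx1, rfl⟩ := hr
      calc φ x ≤ K * n x := hK x
        _ ≤ K * 1 := by nlinarith [hnn x]
        _ = K := mul_one K
    have hsup0 : 0 ≤ sSup s := le_csSup hbdd h0s
    refine Real.sSup_le (fun r hr => ?_) (by positivity)
    obtain ⟨x, hx1, rfl⟩ := hr
    set y : X := M⁻¹ • (-x) with hy
    have hny : n y ≤ 1 := by
      rw [hy, hsmul _ (by positivity)]
      have := hrev x
      calc M⁻¹ * n (-x) ≤ M⁻¹ * (M * n x) := by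
            apply mul_le_mul_of_nonneg_left this (by positivity)
        _ = n x := by field_simp
        _ ≤ 1 := hx1
    have hmem : φ y ∈ s := ⟨y, hny, rfl⟩
    have hle : φ y ≤ sSup s := le_csSup hbdd hmem
    have hφy : φ y = M⁻¹ * (-φ x) := by rw [hy, map_smul, map_neg]; rfl
    rw [hφy] at hle
    calc -φ x = M * (M⁻¹ * (-φ x)) := by
          rw [← mul_assoc, mul_inv_cancel₀ hM.ne', one_mul]
      _ ≤ M * sSup s := by nlinarith

/-- In a finite-dimensional asymmetric normed space there exists `M > 0` with
`‖-x| ≤ M ‖x|` for all `x`; consequently, for every linear functional bounded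
above for the asymmetric norm, its opposite is also bounded above and the dual
conic norms satisfy `‖-φ|* ≤ M ‖φ|*` (so the dual cone is a linear space). -/
theorem finiteDimensional_asymmetric_norm_reverse_bound
    {X : Type*} [AddCommGroup X] [Module ℝ X] [FiniteDimensional ℝ X]
    (n : X → ℝ)
    (hnn : ∀ x, 0 ≤ n x)
    (hadd : ∀ x y, n (x + y) ≤ n x + n y)
    (hsmul : ∀ (r : ℝ), 0 < r → ∀ x, n (r • x) = r * n x)
    (hzero : ∀ x, n x = 0 ↔ x = 0) :
    ∃ M : ℝ, 0 < M ∧ (∀ x : X, n (-x) ≤ M * n x) ∧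
      ∀ φ : X →ₗ[ℝ] ℝ, (∃ K : ℝ, 0 ≤ K ∧ ∀ x, φ x ≤ K * n x) →
        (∃ K : ℝ, 0 ≤ K ∧ ∀ x, -φ x ≤ K * n x) ∧
        sSup {r : ℝ | ∃ x : X, n x ≤ 1 ∧ r = -φ x} ≤
          M * sSup {r : ℝ | ∃ x : X, n x ≤ 1 ∧ r = φ x} := by
  classical
  have h0 : n 0 = 0 := asym_n_zero n hzero
  by_cases hX : Subsingleton X
  · refine ⟨1, one_pos, fun x => ?_, fun φ hφ => ?_⟩
    · rw [Subsingleton.elim (-x) x]; linarith [hnn x]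
    · exact asym_dual n hnn hsmul h0 one_pos
        (fun x => by rw [Subsingleton.elim (-x) x]; linarith [hnn x]) φ hφ
  · have : Nontrivial X := not_subsingleton_iff_nontrivial.mp hX
    set d := Module.finrank ℝ X with hd
    set b : Module.Basis (Fin d) ℝ X := Module.finBasis ℝ X with hb
    set e : X ≃ₗ[ℝ] (Fin d → ℝ) := b.equivFun with he
    have hE : Nontrivial (Fin d → ℝ) := e.symm.toEquiv.nontrivial
    -- g : the asymmetric norm transported to Fin d → ℝ
    set g : (Fin d → ℝ) → ℝ := fun v => n (e.symm v) with hg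
    have hg_nn : ∀ v, 0 ≤ g v := fun v => hnn _
    have hg_add : ∀ u v, g (u + v) ≤ g u + g v := fun u v => by
      simpa [hg, map_add] using hadd (e.symm u) (e.symm v)
    have hg_smul : ∀ (r : ℝ), 0 < r → ∀ v, g (r • v) = r * g v := fun r hr v => by
      simpa [hg, map_smul] using hsmul r hr (e.symm v)
    have hg_zero : ∀ v, g v = 0 ↔ v = 0 := fun v => by
      rw [hg]; simp only [hzero]
      exact ⟨fun h => by simpa using congrArg e h, fun h => by simp [h]⟩
    -- upper bound: g v ≤ C * ‖v‖
    set C : ℝ := ∑ i : Fin d, (n (b i) + n (-(b i))) with hC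
    have hCnn : 0 ≤ C := Finset.sum_nonneg fun i _ => by
      have := hnn (b i); have := hnn (-(b i)); linarith
    have hupper : ∀ v, g v ≤ C * ‖v‖ := by
      intro v
      have hv : e.symm v = ∑ i : Fin d, v i • b i := b.equivFun_symm_apply v
      calc g v = n (∑ i : Fin d, v i • b i) := by show n (e.symm v) = _; rw [hv]
        _ ≤ ∑ i : Fin d, n (v i • b i) := asym_sum_le n h0 hadd _ _
        _ ≤ ∑ i : Fin d, ‖v‖ * (n (b i) + n (-(b i))) := by
            apply Finset.sum_le_sum
            intro i _
            calc n (v i • b i) ≤ |v i| * (n (b i) + n (-(b i))) :=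
                  asym_smul_le n hnn h0 hsmul _ _
              _ ≤ ‖v‖ * (n (b i) + n (-(b i))) := by
                  apply mul_le_mul_of_nonneg_right _
                    (by have := hnn (b i); have := hnn (-(b i)); linarith)
                  simpa using norm_le_pi_norm v i
        _ = C * ‖v‖ := by rw [← Finset.mul_sum, mul_comm]
    -- g is Lipschitz, hence continuous
    have hlip : ∀ u v : Fin d → ℝ, g u ≤ g v + C * ‖u - v‖ := by
      intro u v
      have := hg_add v (u - v)
      simp only [add_sub_cancel] at this
      linarith [hupper (u - v)]
    have hcont : Continuous g := by
      rw [Metric.continuous_iff]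
      intro v ε hε
      rcases le_or_gt C 0 with hC0 | hC0
      · refine ⟨1, one_pos, fun u hu => ?_⟩
        have h1 := hlip u v; have h2 := hlip v u
        have h3 : C * ‖u - v‖ ≤ 0 := mul_nonpos_of_nonpos_of_nonneg hC0 (norm_nonneg _)
        have h4 : C * ‖v - u‖ ≤ 0 := mul_nonpos_of_nonpos_of_nonneg hC0 (norm_nonneg _)
        have : g u = g v := le_antisymm (by linarith) (by linarith)
        simpa [Real.dist_eq, this] using hε
      · refine ⟨ε / C, by positivity, fun u hu => ?_⟩
        rw [dist_eq_norm] at hu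
        have h1 := hlip u v; have h2 := hlip v u
        have hnvu : ‖v - u‖ = ‖u - v‖ := by rw [← norm_neg, neg_sub]
        rw [hnvu] at h2
        have hlt : C * ‖u - v‖ < ε := by
          calc C * ‖u - v‖ < C * (ε / C) := by
                exact mul_lt_mul_of_pos_left hu hC0
            _ = ε := by field_simp
        rw [Real.dist_eq, abs_lt]
        constructor <;> linarith
    -- minimum of g on the unit sphere
    have hsph : (Metric.sphere (0 : Fin d → ℝ) 1).Nonempty :=
      NormedSpace.sphere_nonempty.mpr one_pos.le
    obtain ⟨v₀, hv₀s, hv₀min⟩ :=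
      (isCompact_sphere (0 : Fin d → ℝ) 1).exists_isMinOn hsph hcont.continuousOn
    set c : ℝ := g v₀ with hc
    have hv₀norm : ‖v₀‖ = 1 := by simpa using hv₀s
    have hv₀ne : v₀ ≠ 0 := by
      intro h; rw [h] at hv₀norm; simp at hv₀norm
    have hcpos : 0 < c := by
      rcases (hg_nn v₀).lt_or_eq with h | h
      · exact h
      · exact absurd ((hg_zero v₀).mp h.symm) hv₀ne
    -- lower bound: c * ‖v‖ ≤ g v
    have hlower : ∀ v, c * ‖v‖ ≤ g v := by
      intro v
      rcases eq_or_ne v 0 with rfl | hv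
      · simp [hg_nn, (hg_zero 0).mpr rfl]
      · have hnv : 0 < ‖v‖ := norm_pos_iff.mpr hv
        set u : Fin d → ℝ := ‖v‖⁻¹ • v with hu
        have hus : u ∈ Metric.sphere (0 : Fin d → ℝ) 1 := by
          simp [hu, norm_smul, abs_of_pos (inv_pos.mpr hnv), inv_mul_cancel₀ hnv.ne']
        have hcu : c ≤ g u := hv₀min hus
        have : g v = ‖v‖ * g u := by
          rw [hu, hg_smul _ (inv_pos.mpr hnv)]
          field_simp
        rw [this]
        calc c * ‖v‖ ≤ g u * ‖v‖ := by nlinarith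
          _ = ‖v‖ * g u := mul_comm _ _
    -- assemble: M = C / c
    have hCpos : 0 < C := by
      have h1 := hlower v₀
      have h2 := hupper v₀
      rw [hv₀norm] at h1 h2
      simp only [mul_one] at h1 h2
      linarith
    set M : ℝ := C / c with hM
    have hMpos : 0 < M := div_pos hCpos hcpos
    have hrev : ∀ x : X, n (-x) ≤ M * n x := by
      intro x
      have hx1 : n x = g (e x) := by rw [hg]; simp
      have hx2 : n (-x) = g (-(e x)) := by rw [hg]; simp
      have h1 : g (-(e x)) ≤ C * ‖-(e x)‖ := hupper _
      rw [norm_neg] at h1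
      have h2 : c * ‖e x‖ ≤ g (e x) := hlower _
      rw [hx1, hx2, hM]
      have : C * ‖e x‖ ≤ C / c * (c * ‖e x‖) := by
        have heq : C / c * (c * ‖e x‖) = C * ‖e x‖ := by
          field_simp
        exact heq.ge
      calc g (-(e x)) ≤ C * ‖e x‖ := h1
        _ ≤ C / c * (c * ‖e x‖) := this
        _ ≤ C / c * g (e x) := by
            apply mul_le_mul_of_nonneg_left h2 (by positivity)
    exact ⟨M, hMpos, hrev, fun φ hφ => asym_dual n hnn hsmul h0 hMpos hrev φ hφ⟩
end

section
/- Let ℒ¹(ℝ) be endowed with the asymmetric norm ‖f|_{1,+} = ∫ f⁺ dλ (where f⁺ = max{f,0}). Then the dual cone of (ℒ¹(ℝ), ‖·|_{1,+}) is isometrically isomorphic to the normed cone (ℒ^∞₊(ℝ), ‖·‖_∞) of nonnegative essentially bounded functions: every linear functional φ with φ(f) ≤ M‖f|_{1,+} is of the form φ(f) = ∫ g f dλ for a unique g ∈ ℒ^∞ with g ≥ 0 a.e., and the dual conic norm of φ equals ‖g‖_∞. -/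
open MeasureTheory Set Filter Topology ENNReal

/-- The asymmetric norm `‖f|_{1,+} = ∫ f⁺` on `L¹(ℝ)`. -/
noncomputable def posL1Norm (f : Lp ℝ 1 (volume : Measure ℝ)) : ℝ :=
  ∫ x, max (f x) 0

namespace DualAsym


local notation "vol" => (volume : Measure ℝ)

abbrev L1 : Type := Lp ℝ 1 (volume : Measure ℝ)

variable {φ : L1 →ₗ[ℝ] ℝ} {M : ℝ}

/-- the normalized indicator in L¹ -/
noncomputable def ind {s : Set ℝ} (hs : MeasurableSet s) (hμs : vol s ≠ ∞) : L1 :=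
  indicatorConstLp 1 hs hμs (1:ℝ)

lemma ind_coe {s : Set ℝ} (hs : MeasurableSet s) (hμs : vol s ≠ ∞) :
    ⇑(ind hs hμs) =ᵐ[vol] s.indicator (fun _ => (1:ℝ)) :=
  indicatorConstLp_coeFn

lemma ind_congr {s t : Set ℝ} (hst : s = t) (hs : MeasurableSet s) (hμs : vol s ≠ ∞)
    (ht : MeasurableSet t) (hμt : vol t ≠ ∞) : ind hs hμs = ind ht hμt := by
  subst hst; rfl

lemma posL1Norm_nonneg (f : L1) : 0 ≤ posL1Norm f :=
  integral_nonneg fun x => le_max_right _ _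

lemma integrable_max (f : L1) : Integrable (fun x => max (f x) 0) vol :=
  (L1.integrable_coeFn f).pos_part

lemma posL1Norm_le_norm (f : L1) : posL1Norm f ≤ ‖f‖ := by
  rw [L1.norm_eq_integral_norm]
  refine integral_mono (integrable_max f) (L1.integrable_coeFn f).norm fun x => ?_
  exact max_le (le_abs_self _) (abs_nonneg _)

lemma phi_abs_le (hM : 0 ≤ M) (hbd : ∀ f : L1, φ f ≤ M * posL1Norm f) (f : L1) :
    |φ f| ≤ M * ‖f‖ := by
  rw [abs_le]
  constructor
  · have h := hbd (-f)
    rw [map_neg] at h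
    have : posL1Norm (-f) ≤ ‖f‖ := by
      simpa using (posL1Norm_le_norm (-f))
    nlinarith [mul_le_mul_of_nonneg_left this hM]
  · have h := hbd f
    have : posL1Norm f ≤ ‖f‖ := posL1Norm_le_norm f
    nlinarith [mul_le_mul_of_nonneg_left this hM]

lemma phi_nonpos (hM : 0 ≤ M) (hbd : ∀ f : L1, φ f ≤ M * posL1Norm f) (f : L1)
    (hf : ∀ᵐ x ∂vol, f x ≤ 0) : φ f ≤ 0 := by
  have h0 : posL1Norm f = 0 := by
    rw [posL1Norm, ← integral_zero ℝ ℝ]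
    exact integral_congr_ae (hf.mono fun x hx => by simp [max_eq_right hx])
  have := hbd f
  rw [h0, mul_zero] at this
  exact this

lemma phi_mono (hM : 0 ≤ M) (hbd : ∀ f : L1, φ f ≤ M * posL1Norm f) (f g : L1)
    (hfg : ∀ᵐ x ∂vol, f x ≤ g x) : φ f ≤ φ g := by
  have h : φ (f - g) ≤ 0 := by
    refine phi_nonpos hM hbd _ ?_
    filter_upwards [Lp.coeFn_sub f g, hfg] with x hx hx2
    simp only [hx, Pi.sub_apply]; linarith
  have := map_sub φ f g
  linarith [this ▸ h]

lemma phi_ind_nonneg (hM : 0 ≤ M) (hbd : ∀ f : L1, φ f ≤ M * posL1Norm f)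
    {s : Set ℝ} (hs : MeasurableSet s) (hμs : vol s ≠ ∞) : 0 ≤ φ (ind hs hμs) := by
  have : φ (0 : L1) ≤ φ (ind hs hμs) := by
    refine phi_mono hM hbd _ _ ?_
    filter_upwards [Lp.coeFn_zero ℝ 1 vol, ind_coe hs hμs] with x hx hx2
    rw [hx, hx2]
    exact Set.indicator_nonneg (fun _ _ => zero_le_one) x
  simpa using this

lemma posL1Norm_ind {s : Set ℝ} (hs : MeasurableSet s) (hμs : vol s ≠ ∞) :
    posL1Norm (ind hs hμs) = (vol s).toReal := by
  rw [posL1Norm]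
  have : ∫ x, max ((ind hs hμs) x) 0 ∂vol = ∫ x, s.indicator (fun _ => (1:ℝ)) x ∂vol := by
    refine integral_congr_ae ?_
    filter_upwards [ind_coe hs hμs] with x hx
    rw [hx, max_eq_left (Set.indicator_nonneg (fun _ _ => zero_le_one) x)]
  rw [this, integral_indicator_const (1:ℝ) hs, smul_eq_mul, mul_one, measureReal_def]

lemma phi_ind_le (hbd : ∀ f : L1, φ f ≤ M * posL1Norm f)
    {s : Set ℝ} (hs : MeasurableSet s) (hμs : vol s ≠ ∞) :
    φ (ind hs hμs) ≤ M * (vol s).toReal := by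
  simpa [posL1Norm_ind hs hμs] using hbd (ind hs hμs)

lemma ind_empty (hs : MeasurableSet (∅ : Set ℝ)) (hμs : vol (∅ : Set ℝ) ≠ ∞) :
    ind hs hμs = 0 := by
  refine Lp.ext ?_
  filter_upwards [ind_coe hs hμs, Lp.coeFn_zero ℝ 1 vol] with x hx hx2
  rw [hx, hx2]; simp

lemma ind_union {s t : Set ℝ} (hst : Disjoint s t) (hs : MeasurableSet s) (hμs : vol s ≠ ∞)
    (ht : MeasurableSet t) (hμt : vol t ≠ ∞) (hu : MeasurableSet (s ∪ t)) (hμu : vol (s ∪ t) ≠ ∞) :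
    ind hu hμu = ind hs hμs + ind ht hμt :=
  indicatorConstLp_disjoint_union hs ht hμs hμt hst (1:ℝ)

lemma vol_Ioc_ne_top (a b : ℝ) : vol (Ioc a b) ≠ ∞ := by
  rw [Real.volume_Ioc]; exact ofReal_ne_top

/-- indicator of Ioc -/
noncomputable def iInd (φ : L1 →ₗ[ℝ] ℝ) (a b : ℝ) : ℝ := φ (ind measurableSet_Ioc (vol_Ioc_ne_top a b))

lemma iInd_empty (a b : ℝ) (h : b ≤ a) : iInd φ a b = 0 := by
  rw [iInd]
  have : ind (s := Ioc a b) measurableSet_Ioc (vol_Ioc_ne_top a b) = 0 := by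
    rw [ind_congr (Ioc_eq_empty (not_lt.2 h)) _ _ MeasurableSet.empty (by simp)]
    exact ind_empty _ _
  rw [this, map_zero]

lemma iInd_chain (a b c : ℝ) (hab : a ≤ b) (hbc : b ≤ c) :
    iInd φ a c = iInd φ a b + iInd φ b c := by
  simp only [iInd]
  rw [← map_add, ← ind_union (Ioc_disjoint_Ioc_of_le le_rfl) measurableSet_Ioc (vol_Ioc_ne_top a b)
      measurableSet_Ioc (vol_Ioc_ne_top b c) (measurableSet_Ioc.union measurableSet_Ioc)
      (by rw [Ioc_union_Ioc_eq_Ioc hab hbc]; exact vol_Ioc_ne_top a c)]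
  exact congrArg φ (ind_congr (Ioc_union_Ioc_eq_Ioc hab hbc).symm _ _ _ _)

/-- the cumulative function -/
noncomputable def Ff (φ : L1 →ₗ[ℝ] ℝ) (t : ℝ) : ℝ := iInd φ 0 t - iInd φ t 0

lemma Ff_diff (hs : ∀ a b : ℝ, a ≤ b → iInd φ a b = iInd φ a b) {s t : ℝ} (hst : s ≤ t) :
    Ff φ t - Ff φ s = iInd φ s t := by
  rcases le_total 0 s with h0s | hs0
  · have h0t : (0:ℝ) ≤ t := h0s.trans hst
    rw [Ff, Ff, iInd_empty t 0 h0t, iInd_empty s 0 h0s, iInd_chain 0 s t h0s hst]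
    ring
  · rcases le_total 0 t with h0t | ht0
    · rw [Ff, Ff, iInd_empty t 0 h0t, iInd_empty 0 s hs0, iInd_chain s 0 t hs0 h0t]
      ring
    · rw [Ff, Ff, iInd_empty 0 t ht0, iInd_empty 0 s hs0, iInd_chain s t 0 hst ht0]
      ring


lemma vol_Ioc_toReal {a b : ℝ} (h : a ≤ b) : (vol (Ioc a b)).toReal = b - a := by
  rw [Real.volume_Ioc, toReal_ofReal (by linarith)]

lemma Ff_mono (hM : 0 ≤ M) (hbd : ∀ f : L1, φ f ≤ M * posL1Norm f) : Monotone (Ff φ) := by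
  intro s t hst
  have h := Ff_diff (φ := φ) (fun a b _ => rfl) hst
  have h2 : 0 ≤ iInd φ s t := phi_ind_nonneg hM hbd _ _
  linarith

lemma Ff_lip (hM : 0 ≤ M) (hbd : ∀ f : L1, φ f ≤ M * posL1Norm f) {s t : ℝ} (hst : s ≤ t) :
    Ff φ t - Ff φ s ≤ M * (t - s) := by
  rw [Ff_diff (fun a b _ => rfl) hst]
  have := phi_ind_le (s := Ioc s t) hbd measurableSet_Ioc (vol_Ioc_ne_top s t)
  rwa [vol_Ioc_toReal hst] at this

lemma Ff_cont (hM : 0 ≤ M) (hbd : ∀ f : L1, φ f ≤ M * posL1Norm f) : Continuous (Ff φ) := by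
  have : LipschitzWith (M.toNNReal) (Ff φ) := by
    refine LipschitzWith.of_dist_le_mul fun x y => ?_
    rw [Real.dist_eq, Real.dist_eq, Real.coe_toNNReal M hM]
    rcases le_total x y with h | h
    · rw [abs_of_nonpos (by linarith [Ff_mono hM hbd h]), abs_of_nonpos (by linarith)]
      have := Ff_lip hM hbd h; linarith
    · rw [abs_of_nonneg (by linarith [Ff_mono hM hbd h]), abs_of_nonneg (by linarith)]
      have := Ff_lip hM hbd h; linarith
  exact this.continuous

/-- the Stieltjes function -/
noncomputable def SF (hM : 0 ≤ M) (hbd : ∀ f : L1, φ f ≤ M * posL1Norm f) : StieltjesFunction ℝ :=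
  ⟨Ff φ, Ff_mono hM hbd, fun x => (Ff_cont hM hbd).continuousWithinAt⟩

lemma nu_Ioc (hM : 0 ≤ M) (hbd : ∀ f : L1, φ f ≤ M * posL1Norm f) {a b : ℝ} (hab : a ≤ b) :
    (SF hM hbd (φ := φ)).measure (Ioc a b) = ENNReal.ofReal (iInd φ a b) := by
  rw [StieltjesFunction.measure_Ioc]
  congr 1
  exact Ff_diff (fun _ _ _ => rfl) hab

lemma nu_Ioc_toReal (hM : 0 ≤ M) (hbd : ∀ f : L1, φ f ≤ M * posL1Norm f) (a b : ℝ) :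
    ((SF hM hbd (φ := φ)).measure (Ioc a b)).toReal = iInd φ a b := by
  rcases le_total a b with hab | hba
  · rw [nu_Ioc hM hbd hab]; exact toReal_ofReal (phi_ind_nonneg hM hbd _ _)
  · rw [iInd_empty _ _ hba, Ioc_eq_empty (not_lt.2 hba), measure_empty]; simp

lemma nu_Ioc_ne_top (hM : 0 ≤ M) (hbd : ∀ f : L1, φ f ≤ M * posL1Norm f) (a b : ℝ) :
    (SF hM hbd (φ := φ)).measure (Ioc a b) ≠ ∞ := by
  rcases le_total a b with hab | hba
  · rw [nu_Ioc hM hbd hab]; exact ofReal_ne_top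
  · rw [Ioc_eq_empty (not_lt.2 hba), measure_empty]; exact zero_ne_top


lemma iUnion_Ioc_nat : ⋃ n : ℕ, Ioc (-(n:ℝ)) n = univ := by
  ext x; simp only [mem_iUnion, mem_Ioc, mem_univ, iff_true]
  obtain ⟨n, hn⟩ := exists_nat_gt |x|
  have := abs_lt.1 hn
  exact ⟨n, by linarith [this.1], le_of_lt this.2⟩

lemma Ioc_nat_mono : Monotone (fun n : ℕ => Ioc (-(n:ℝ)) n) := by
  intro a b hab
  refine Ioc_subset_Ioc ?_ ?_ <;> · simp only [neg_le_neg_iff, Nat.cast_le]; exact_mod_cast hab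

lemma norm_ind {s : Set ℝ} (hs : MeasurableSet s) (hμs : vol s ≠ ∞) :
    ‖ind hs hμs‖ = (vol s).toReal := by
  rw [ind, norm_indicatorConstLp one_ne_zero one_ne_top]
  simp [measureReal_def]

/-- convergence of φ on increasing unions -/
lemma phi_ind_tendsto (hM : 0 ≤ M) (hbd : ∀ f : L1, φ f ≤ M * posL1Norm f)
    {A : ℕ → Set ℝ} {B : Set ℝ} (hA : ∀ k, MeasurableSet (A k)) (hmono : Monotone A)
    (hB : MeasurableSet B) (hμB : vol B ≠ ∞) (hUB : ⋃ k, A k = B) :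
    Tendsto (fun k => φ (ind (hA k) (by
      refine fun h => hμB (top_le_iff.mp ?_); rw [← h]
      exact measure_mono (hUB ▸ subset_iUnion A k)))) atTop (𝓝 (φ (ind hB hμB))) := by
  have hsub : ∀ k, A k ⊆ B := fun k => hUB ▸ subset_iUnion A k
  have hAfin : ∀ k, vol (A k) ≠ ∞ := fun k =>
    fun h => hμB (top_le_iff.mp (h ▸ measure_mono (hsub k)))
  have hdfin : ∀ k, vol (B \ A k) ≠ ∞ := fun k =>
    fun h => hμB (top_le_iff.mp (h ▸ measure_mono diff_subset))
  rw [tendsto_iff_dist_tendsto_zero]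
  have hsplit : ∀ k, φ (ind hB hμB) = φ (ind (hA k) (hAfin k)) + φ (ind (hB.diff (hA k)) (hdfin k)) := by
    intro k
    rw [← map_add, ← ind_union (disjoint_sdiff_right.mono_left le_rfl) (hA k) (hAfin k)
        (hB.diff (hA k)) (hdfin k) ((hA k).union (hB.diff (hA k)))
        (by rw [union_diff_cancel (hsub k)]; exact hμB)]
    exact congrArg φ (ind_congr (union_diff_cancel (hsub k)).symm _ _ _ _)
  refine squeeze_zero (fun k => dist_nonneg) (g := fun k => M * (vol (B \ A k)).toReal) ?_ ?_
  · intro k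
    rw [Real.dist_eq]
    have h1 : φ (ind (hA k) (hAfin k)) - φ (ind hB hμB) = -(φ (ind (hB.diff (hA k)) (hdfin k))) := by
      rw [hsplit k]; ring
    rw [h1, abs_neg]
    calc |φ (ind (hB.diff (hA k)) (hdfin k))| ≤ M * ‖ind (hB.diff (hA k)) (hdfin k)‖ :=
          phi_abs_le hM hbd _
      
      _ = M * (vol (B \ A k)).toReal := by rw [norm_ind]
  · have hT : Tendsto (fun k => vol (B \ A k)) atTop (𝓝 0) := by
      have h1 : ⋂ k, (B \ A k) = ∅ := by
        rw [← Set.diff_iUnion, hUB, diff_self]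
      have := MeasureTheory.tendsto_measure_iInter_atTop
        (μ := vol) (s := fun k => B \ A k)
        (fun k => ((hB.diff (hA k))).nullMeasurableSet)
        (fun a b hab => diff_subset_diff_right (hmono hab)) ⟨0, hdfin 0⟩
      rwa [h1, measure_empty] at this
    have := (ENNReal.tendsto_toReal zero_ne_top).comp hT
    simp only [Function.comp, ENNReal.toReal_zero] at this
    simpa using this.const_mul M


lemma vol_sub_ne_top {t u : Set ℝ} (h : t ⊆ u) (hu : vol u ≠ ∞) : vol t ≠ ∞ :=
  fun hh => hu (top_le_iff.mp (hh ▸ measure_mono h))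

/-- splitting φ over a subset -/
lemma phi_ind_split (hM : 0 ≤ M) (hbd : ∀ f : L1, φ f ≤ M * posL1Norm f)
    {A B : Set ℝ} (hA : MeasurableSet A) (hB : MeasurableSet B) (hAB : A ⊆ B)
    (hμB : vol B ≠ ∞) :
    φ (ind hB hμB) = φ (ind hA (vol_sub_ne_top hAB hμB))
      + φ (ind (hB.diff hA) (vol_sub_ne_top diff_subset hμB)) := by
  rw [← map_add, ← ind_union disjoint_sdiff_right hA (vol_sub_ne_top hAB hμB)
      (hB.diff hA) (vol_sub_ne_top diff_subset hμB) (hA.union (hB.diff hA))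
      (by rw [union_diff_cancel hAB]; exact hμB)]
  exact congrArg φ (ind_congr (union_diff_cancel hAB).symm _ _ _ _)

lemma key_inter (hM : 0 ≤ M) (hbd : ∀ f : L1, φ f ≤ M * posL1Norm f) :
    ∀ ⦃s : Set ℝ⦄, MeasurableSet s → ∀ n : ℕ,
      ∀ (hsm : MeasurableSet (s ∩ Ioc (-(n:ℝ)) n)) (hsf : vol (s ∩ Ioc (-(n:ℝ)) n) ≠ ∞),
      φ (ind hsm hsf) = ((SF hM hbd (φ := φ)).measure (s ∩ Ioc (-(n:ℝ)) n)).toReal := by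
  set ν := (SF hM hbd (φ := φ)).measure with hν
  have hIoc : ∀ a b : ℝ, ∀ (hm : MeasurableSet (Ioc a b)) (hf : vol (Ioc a b) ≠ ∞),
      φ (ind hm hf) = (ν (Ioc a b)).toReal := fun a b hm hf => (nu_Ioc_toReal hM hbd a b).symm
  have hνIoc_fin : ∀ {t : Set ℝ} {a b : ℝ}, t ⊆ Ioc a b → ν t ≠ ∞ := by
    intro t a b h hh
    exact nu_Ioc_ne_top hM hbd a b (top_le_iff.mp (hh ▸ measure_mono h))
  refine MeasurableSpace.induction_on_inter (C := fun s _ => ∀ n : ℕ,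
      ∀ (hsm : MeasurableSet (s ∩ Ioc (-(n:ℝ)) n)) (hsf : vol (s ∩ Ioc (-(n:ℝ)) n) ≠ ∞),
      φ (ind hsm hsf) = (ν (s ∩ Ioc (-(n:ℝ)) n)).toReal)
    (BorelSpace.measurable_eq.trans (borel_eq_generateFrom_Ioc ℝ)) (isPiSystem_Ioc id id)
    ?_ ?_ ?_ ?_
  · -- empty
    intro n hsm hsf
    rw [ind_congr (empty_inter _) hsm hsf MeasurableSet.empty (by simp), ind_empty, map_zero]
    rw [empty_inter, measure_empty]; simp
  · -- Ioc
    rintro t ⟨l, u, -, rfl⟩ n hsm hsf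
    have hset : Ioc l u ∩ Ioc (-(n:ℝ)) n = Ioc (max l (-(n:ℝ))) (min u n) := Ioc_inter_Ioc
    rw [ind_congr hset hsm hsf measurableSet_Ioc (vol_Ioc_ne_top _ _), hIoc, hset]
  · -- complement
    intro t htm ht n hsm hsf
    have hset : tᶜ ∩ Ioc (-(n:ℝ)) n = Ioc (-(n:ℝ)) n \ (t ∩ Ioc (-(n:ℝ)) n) := by
      ext x; simp only [mem_inter_iff, mem_compl_iff, mem_diff]; tauto
    have hsub : t ∩ Ioc (-(n:ℝ)) n ⊆ Ioc (-(n:ℝ)) n := inter_subset_right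
    have hInm : MeasurableSet (Ioc (-(n:ℝ)) n) := measurableSet_Ioc
    have hInf : vol (Ioc (-(n:ℝ)) n) ≠ ∞ := vol_Ioc_ne_top _ _
    have hsplit := phi_ind_split hM hbd (htm.inter hInm) hInm hsub hInf
    rw [ind_congr hset hsm hsf (hInm.diff (htm.inter hInm)) (vol_sub_ne_top diff_subset hInf)]
    have h1 := hIoc (-(n:ℝ)) n hInm hInf
    have h2 := ht n (htm.inter hInm) (vol_sub_ne_top hsub hInf)
    have hνd : ν (Ioc (-(n:ℝ)) n \ (t ∩ Ioc (-(n:ℝ)) n)) 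
        = ν (Ioc (-(n:ℝ)) n) - ν (t ∩ Ioc (-(n:ℝ)) n) :=
      measure_diff hsub (htm.inter hInm).nullMeasurableSet (hνIoc_fin hsub)
    rw [hset, hνd, ENNReal.toReal_sub_of_le (measure_mono hsub) (hνIoc_fin (le_refl _))]
    have := phi_ind_split hM hbd (htm.inter hInm) hInm hsub hInf
    rw [h2] at this
    rw [h1] at this
    linarith
  · -- disjoint union
    intro f hdisj hmeas hC n hsm hsf
    have hInm : MeasurableSet (Ioc (-(n:ℝ)) n) := measurableSet_Ioc
    have hInf : vol (Ioc (-(n:ℝ)) n) ≠ ∞ := vol_Ioc_ne_top _ _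
    set g : ℕ → Set ℝ := fun i => f i ∩ Ioc (-(n:ℝ)) n with hg
    have hgm : ∀ i, MeasurableSet (g i) := fun i => (hmeas i).inter hInm
    have hgsub : ∀ i, g i ⊆ Ioc (-(n:ℝ)) n := fun i => inter_subset_right
    set B : ℕ → Set ℝ := fun k => ⋃ i < k, g i with hB
    have hBm : ∀ k, MeasurableSet (B k) := fun k => MeasurableSet.biUnion (to_countable _)
      (fun i _ => hgm i)
    have hBmono : Monotone B := fun a b hab =>
      biUnion_subset_biUnion_left fun i hi => lt_of_lt_of_le hi hab
    have hBsub : ∀ k, B k ⊆ Ioc (-(n:ℝ)) n := fun k =>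
      iUnion₂_subset fun i _ => hgsub i
    have hUB : ⋃ k, B k = (⋃ i, f i) ∩ Ioc (-(n:ℝ)) n := by
      rw [iUnion_inter]
      ext x
      simp only [hB, mem_iUnion]
      constructor
      · rintro ⟨k, i, hik, hx⟩; exact ⟨i, hx⟩
      · rintro ⟨i, hx⟩; exact ⟨i + 1, i, Nat.lt_succ_self i, hx⟩
    -- finite additivity by induction
    have hfin : ∀ k, φ (ind (hBm k) (vol_sub_ne_top (hBsub k) hInf)) = (ν (B k)).toReal := by
      intro k
      induction k with
      | zero =>
        have : B 0 = ∅ := by simp [hB]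
        rw [ind_congr this _ _ MeasurableSet.empty (by simp), ind_empty, map_zero, this,
          measure_empty]
        simp
      | succ k ih =>
        have hstep : B (k + 1) = B k ∪ g k := biUnion_lt_succ g k
        have hdisjk : Disjoint (B k) (g k) := by
          refine disjoint_left.2 fun x hx hx2 => ?_
          simp only [hB, mem_iUnion] at hx
          obtain ⟨i, hik, hxi⟩ := hx
          exact disjoint_left.1 ((hdisj (ne_of_lt hik)).mono inter_subset_left inter_subset_left)
            hxi hx2
        have hind := ind_union hdisjk (hBm k) (vol_sub_ne_top (hBsub k) hInf) (hgm k)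
          (vol_sub_ne_top (hgsub k) hInf) ((hBm k).union (hgm k))
          (vol_sub_ne_top (union_subset (hBsub k) (hgsub k)) hInf)
        rw [ind_congr hstep _ (vol_sub_ne_top (hBsub (k+1)) hInf) ((hBm k).union (hgm k))
            (vol_sub_ne_top (union_subset (hBsub k) (hgsub k)) hInf), hind, map_add, ih,
          hC k n (hgm k) (vol_sub_ne_top (hgsub k) hInf), hstep,
          measure_union hdisjk (hgm k),
          ENNReal.toReal_add (hνIoc_fin (hBsub k)) (hνIoc_fin (hgsub k))]
    -- limits
    have hmeasU : MeasurableSet ((⋃ i, f i) ∩ Ioc (-(n:ℝ)) n) := hsm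
    have hT1 := phi_ind_tendsto hM hbd hBm hBmono hsm hsf hUB
    have hT2 : Tendsto (fun k => (ν (B k)).toReal) atTop
        (𝓝 ((ν ((⋃ i, f i) ∩ Ioc (-(n:ℝ)) n)).toReal)) := by
      have h := tendsto_measure_iUnion_atTop (μ := ν) hBmono
      rw [hUB] at h
      exact (ENNReal.tendsto_toReal (hνIoc_fin inter_subset_right)).comp h
    have : Tendsto (fun k => φ (ind (hBm k) (vol_sub_ne_top (hBsub k) hInf))) atTop
        (𝓝 ((ν ((⋃ i, f i) ∩ Ioc (-(n:ℝ)) n)).toReal)) := by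
      refine hT2.congr fun k => (hfin k).symm
    exact tendsto_nhds_unique hT1 this


lemma inter_Ioc_mono (s : Set ℝ) : Monotone (fun n : ℕ => s ∩ Ioc (-(n:ℝ)) n) :=
  fun a b hab => inter_subset_inter_right s (Ioc_nat_mono hab)

lemma iUnion_inter_Ioc (s : Set ℝ) : ⋃ n : ℕ, s ∩ Ioc (-(n:ℝ)) n = s := by
  rw [← inter_iUnion, iUnion_Ioc_nat, inter_univ]

lemma nu_le (hM : 0 ≤ M) (hbd : ∀ f : L1, φ f ≤ M * posL1Norm f)
    {s : Set ℝ} (hs : MeasurableSet s) :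
    (SF hM hbd (φ := φ)).measure s ≤ ENNReal.ofReal M * vol s := by
  set ν := (SF hM hbd (φ := φ)).measure with hν
  have h := tendsto_measure_iUnion_atTop (μ := ν) (inter_Ioc_mono s)
  rw [iUnion_inter_Ioc] at h
  refine le_of_tendsto h (Filter.Eventually.of_forall fun n => ?_)
  simp only [Function.comp]
  have hsm : MeasurableSet (s ∩ Ioc (-(n:ℝ)) n) := hs.inter measurableSet_Ioc
  have hsf : vol (s ∩ Ioc (-(n:ℝ)) n) ≠ ∞ :=
    vol_sub_ne_top inter_subset_right (vol_Ioc_ne_top _ _)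
  have hνf : ν (s ∩ Ioc (-(n:ℝ)) n) ≠ ∞ := by
    intro hh
    exact nu_Ioc_ne_top hM hbd (-(n:ℝ)) n (top_le_iff.mp (hh ▸ measure_mono inter_subset_right))
  have hkey := key_inter hM hbd hs n hsm hsf
  calc ν (s ∩ Ioc (-(n:ℝ)) n) = ENNReal.ofReal ((ν (s ∩ Ioc (-(n:ℝ)) n)).toReal) :=
        (ofReal_toReal hνf).symm
    _ ≤ ENNReal.ofReal (M * (vol (s ∩ Ioc (-(n:ℝ)) n)).toReal) := by
        refine ofReal_le_ofReal ?_
        rw [← hkey]; exact phi_ind_le hbd hsm hsf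
    _ = ENNReal.ofReal M * ENNReal.ofReal ((vol (s ∩ Ioc (-(n:ℝ)) n)).toReal) :=
        ofReal_mul hM
    _ ≤ ENNReal.ofReal M * vol (s ∩ Ioc (-(n:ℝ)) n) := by
        gcongr; exact ofReal_toReal_le
    _ ≤ ENNReal.ofReal M * vol s := by gcongr; exact inter_subset_left

lemma nu_fin (hM : 0 ≤ M) (hbd : ∀ f : L1, φ f ≤ M * posL1Norm f)
    {s : Set ℝ} (hs : MeasurableSet s) (hμs : vol s ≠ ∞) :
    (SF hM hbd (φ := φ)).measure s ≠ ∞ := by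
  intro hh
  have := nu_le hM hbd hs
  rw [hh, top_le_iff] at this
  exact (mul_ne_top ofReal_ne_top hμs) this

/-- the global key identity -/
lemma key (hM : 0 ≤ M) (hbd : ∀ f : L1, φ f ≤ M * posL1Norm f)
    {s : Set ℝ} (hs : MeasurableSet s) (hμs : vol s ≠ ∞) :
    φ (ind hs hμs) = ((SF hM hbd (φ := φ)).measure s).toReal := by
  set ν := (SF hM hbd (φ := φ)).measure with hν
  have hsm : ∀ n : ℕ, MeasurableSet (s ∩ Ioc (-(n:ℝ)) n) :=
    fun n => hs.inter measurableSet_Ioc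
  have hT1 := phi_ind_tendsto hM hbd hsm (inter_Ioc_mono s) hs hμs (iUnion_inter_Ioc s)
  have hT2 : Tendsto (fun n : ℕ => (ν (s ∩ Ioc (-(n:ℝ)) n)).toReal) atTop (𝓝 ((ν s).toReal)) := by
    have h := tendsto_measure_iUnion_atTop (μ := ν) (inter_Ioc_mono s)
    rw [iUnion_inter_Ioc] at h
    exact Tendsto.congr (fun n => rfl)
      ((ENNReal.tendsto_toReal (nu_fin hM hbd hs hμs)).comp h)
  have hT1' : Tendsto (fun n : ℕ => (ν (s ∩ Ioc (-(n:ℝ)) n)).toReal) atTop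
      (𝓝 (φ (ind hs hμs))) :=
    hT1.congr fun n => key_inter hM hbd hs n (hsm n) _
  exact tendsto_nhds_unique hT1' hT2

instance : SigmaFinite (volume : Measure ℝ) := by infer_instance

lemma nu_sigmaFinite (hM : 0 ≤ M) (hbd : ∀ f : L1, φ f ≤ M * posL1Norm f) :
    SigmaFinite ((SF hM hbd (φ := φ)).measure) := by
  refine ⟨⟨⟨fun n => Ioc (-(n:ℝ)) n, fun _ => trivial, fun n => ?_, ?_⟩⟩⟩
  · exact lt_top_iff_ne_top.2 (nu_Ioc_ne_top hM hbd _ _)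
  · exact iUnion_Ioc_nat

lemma nu_ac (hM : 0 ≤ M) (hbd : ∀ f : L1, φ f ≤ M * posL1Norm f) :
    (SF hM hbd (φ := φ)).measure ≪ vol := by
  refine Measure.AbsolutelyContinuous.mk fun s hs h0 => ?_
  have := nu_le hM hbd hs
  rw [h0, mul_zero] at this
  exact le_antisymm this zero_le


section Density

variable (hM : 0 ≤ M) (hbd : ∀ f : L1, φ f ≤ M * posL1Norm f)

/-- the Radon–Nikodym density -/
noncomputable def dens (hM : 0 ≤ M) (hbd : ∀ f : L1, φ f ≤ M * posL1Norm f) : ℝ → ℝ≥0∞ :=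
  ((SF hM hbd (φ := φ)).measure).rnDeriv vol

lemma dens_meas : Measurable (dens (φ := φ) hM hbd) :=
  Measure.measurable_rnDeriv _ _

lemma withDensity_dens : Measure.withDensity vol (dens (φ := φ) hM hbd) = (SF hM hbd (φ := φ)).measure := by
  haveI := nu_sigmaFinite hM hbd (φ := φ)
  exact Measure.withDensity_rnDeriv_eq _ _ (nu_ac hM hbd)

lemma setLIntegral_dens {s : Set ℝ} (hs : MeasurableSet s) :
    ∫⁻ x in s, dens (φ := φ) hM hbd x ∂vol = (SF hM hbd (φ := φ)).measure s := by
  rw [← withDensity_dens (φ := φ) hM hbd, withDensity_apply _ hs]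

lemma dens_le : dens (φ := φ) hM hbd ≤ᵐ[vol] fun _ => ENNReal.ofReal M := by
  refine ae_le_of_forall_setLIntegral_le_of_sigmaFinite (dens_meas hM hbd) fun s hs hlt => ?_
  rw [setLIntegral_dens hM hbd hs, setLIntegral_const]
  exact nu_le hM hbd hs

/-- the real-valued density -/
noncomputable def g0 (hM : 0 ≤ M) (hbd : ∀ f : L1, φ f ≤ M * posL1Norm f) : ℝ → ℝ :=
  fun x => (dens (φ := φ) hM hbd x).toReal

lemma g0_meas : Measurable (g0 (φ := φ) hM hbd) := (dens_meas hM hbd).ennreal_toReal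

lemma g0_nonneg (x : ℝ) : 0 ≤ g0 (φ := φ) hM hbd x := ENNReal.toReal_nonneg

lemma g0_bound : ∀ᵐ x ∂vol, ‖g0 (φ := φ) hM hbd x‖ ≤ M := by
  filter_upwards [dens_le (φ := φ) hM hbd] with x hx
  rw [Real.norm_eq_abs, abs_of_nonneg (g0_nonneg hM hbd x)]
  exact ENNReal.toReal_le_of_le_ofReal hM hx

lemma g0_memLp : MemLp (g0 (φ := φ) hM hbd) ∞ vol :=
  memLp_top_of_bound (g0_meas hM hbd).aestronglyMeasurable M (g0_bound hM hbd)

lemma setIntegral_g0 {s : Set ℝ} (hs : MeasurableSet s) (hμs : vol s ≠ ∞) :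
    ∫ x in s, g0 (φ := φ) hM hbd x ∂vol = ((SF hM hbd (φ := φ)).measure s).toReal := by
  simp only [g0]
  rw [integral_toReal ((dens_meas (φ := φ) hM hbd).aemeasurable.restrict)
    (ae_restrict_of_ae ((dens_le hM hbd).mono fun x hx =>
      lt_of_le_of_lt hx ENNReal.ofReal_lt_top))]
  rw [setLIntegral_dens hM hbd hs]

lemma integrable_g0_mul (f : L1) :
    Integrable (fun x => g0 (φ := φ) hM hbd x * f x) vol :=
  (L1.integrable_coeFn f).bdd_mul (g0_meas hM hbd).aestronglyMeasurable (g0_bound hM hbd)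

end Density


lemma indicatorConstLp_eq_smul {s : Set ℝ} (hs : MeasurableSet s) (hμs : vol s ≠ ∞) (c : ℝ) :
    indicatorConstLp 1 hs hμs c = c • ind hs hμs := by
  refine Lp.ext ?_
  filter_upwards [indicatorConstLp_coeFn (p := 1) (hs := hs) (hμs := hμs) (c := c),
    Lp.coeFn_smul c (ind hs hμs), ind_coe hs hμs] with x h1 h2 h3
  rw [h1, h2, Pi.smul_apply, h3, smul_eq_mul]
  by_cases hx : x ∈ s <;> simp [indicator_apply, hx]

lemma phi_cont (hM : 0 ≤ M) (hbd : ∀ f : L1, φ f ≤ M * posL1Norm f) :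
    Continuous fun f : L1 => φ f :=
  (φ.mkContinuous M (phi_abs_le hM hbd)).continuous

lemma psi_cont (hM : 0 ≤ M) (hbd : ∀ f : L1, φ f ≤ M * posL1Norm f) :
    Continuous fun f : L1 => ∫ x, g0 (φ := φ) hM hbd x * f x := by
  set G := g0 (φ := φ) hM hbd with hG
  refine (LipschitzWith.of_dist_le_mul (K := ⟨max M 0, le_max_right _ _⟩) fun f h => ?_).continuous
  rw [dist_eq_norm, dist_eq_norm]; change _ ≤ max M 0 * ‖f - h‖
  have hint1 := integrable_g0_mul (φ := φ) hM hbd f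
  have hint2 := integrable_g0_mul (φ := φ) hM hbd h
  have hint3 := integrable_g0_mul (φ := φ) hM hbd (f - h)
  rw [Real.norm_eq_abs, ← integral_sub hint1 hint2]
  have he : ∫ x, G x * (f - h) x = ∫ x, (G x * f x - G x * h x) := by
    refine integral_congr_ae ?_
    filter_upwards [Lp.coeFn_sub f h] with x hx
    rw [hx, Pi.sub_apply]; ring
  rw [← he]
  calc |∫ x, G x * (f - h) x| ≤ ∫ x, |G x * (f - h) x| := by
        simpa only [Real.norm_eq_abs] using norm_integral_le_integral_norm (fun x => G x * (f - h) x)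
    _ ≤ ∫ x, max M 0 * ‖(f - h) x‖ := by
        refine integral_mono_ae hint3.abs (((L1.integrable_coeFn (f - h)).norm).const_mul _) ?_
        filter_upwards [g0_bound (φ := φ) hM hbd] with x hx
        rw [abs_mul, Real.norm_eq_abs] at *
        exact mul_le_mul_of_nonneg_right (hx.trans (le_max_left _ _)) (abs_nonneg _)
    _ = max M 0 * ‖f - h‖ := by
        rw [integral_const_mul, L1.norm_eq_integral_norm]

/-- the representation -/
lemma phi_repr (hM : 0 ≤ M) (hbd : ∀ f : L1, φ f ≤ M * posL1Norm f) (f : L1) :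
    φ f = ∫ x, g0 (φ := φ) hM hbd x * f x := by
  set G := g0 (φ := φ) hM hbd with hG
  refine Lp.induction one_ne_top (motive := fun f : L1 => φ f = ∫ x, G x * f x) ?_ ?_ ?_ f
  · intro c s hs hμs
    rw [Lp.simpleFunc.coe_indicatorConst, indicatorConstLp_eq_smul hs hμs.ne c, _root_.map_smul,
      smul_eq_mul, key hM hbd hs hμs.ne]
    have h1 : ∫ x, G x * (c • ind hs hμs.ne) x = ∫ x, s.indicator (fun y => G y * c) x := by
      refine integral_congr_ae ?_
      filter_upwards [Lp.coeFn_smul c (ind hs hμs.ne), ind_coe hs hμs.ne] with x h2 h3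
      rw [h2, Pi.smul_apply, h3, smul_eq_mul]
      by_cases hx : x ∈ s <;> simp [indicator_apply, hx]
    rw [h1, integral_indicator hs, integral_mul_const, setIntegral_g0 hM hbd hs hμs.ne]
    ring
  · intro f g hf hg hdisj h1 h2
    rw [map_add, h1, h2]
    have he : ∫ x, G x * (hf.toLp f + hg.toLp g) x
        = ∫ x, (G x * (hf.toLp f) x + G x * (hg.toLp g) x) := by
      refine integral_congr_ae ?_
      filter_upwards [Lp.coeFn_add (hf.toLp f) (hg.toLp g)] with x hx
      rw [hx, Pi.add_apply]; ring
    rw [he, integral_add (integrable_g0_mul hM hbd _) (integrable_g0_mul hM hbd _)]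
  · exact isClosed_eq (phi_cont hM hbd) (psi_cont hM hbd)


lemma Lp_top_ae_le (h : Lp ℝ ⊤ vol) : ∀ᵐ x ∂vol, ‖h x‖ ≤ ‖h‖ := by
  have h1 : eLpNorm h ⊤ vol ≠ ∞ := Lp.eLpNorm_ne_top h
  rw [eLpNorm_exponent_top] at h1
  filter_upwards [ae_le_eLpNormEssSup (f := ⇑h) (μ := vol)] with x hx
  have := ENNReal.toReal_mono h1 hx
  rw [toReal_enorm] at this
  rwa [Lp.norm_def, eLpNorm_exponent_top]

lemma posL1Norm_smul_ind {a : ℝ} (ha : 0 ≤ a) {s : Set ℝ} (hs : MeasurableSet s)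
    (hμs : vol s ≠ ∞) : posL1Norm (a • ind hs hμs) = a * (vol s).toReal := by
  rw [posL1Norm]
  have h1 : ∫ x, max ((a • ind hs hμs) x) 0 ∂vol
      = ∫ x, a * s.indicator (fun _ => (1:ℝ)) x ∂vol := by
    refine integral_congr_ae ?_
    filter_upwards [Lp.coeFn_smul a (ind hs hμs), ind_coe hs hμs] with x h2 h3
    rw [h2, Pi.smul_apply, h3, smul_eq_mul]
    by_cases hx : x ∈ s <;> simp [indicator_apply, hx, ha]
  rw [h1, integral_const_mul, integral_indicator_const (1:ℝ) hs, smul_eq_mul, mul_one, measureReal_def]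

lemma mul_ind_integral (h : ℝ → ℝ) {s : Set ℝ} (hs : MeasurableSet s) (hμs : vol s ≠ ∞) :
    ∫ x, h x * (ind hs hμs) x ∂vol = ∫ x in s, h x ∂vol := by
  have h1 : ∫ x, h x * (ind hs hμs) x ∂vol = ∫ x, s.indicator h x ∂vol := by
    refine integral_congr_ae ?_
    filter_upwards [ind_coe hs hμs] with x hx
    rw [hx]
    by_cases hxs : x ∈ s <;> simp [indicator_apply, hxs]
  rw [h1, integral_indicator hs]

section Main

variable (hM : 0 ≤ M) (hbd : ∀ f : L1, φ f ≤ M * posL1Norm f)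

/-- the L∞ representative -/
noncomputable def gL (hM : 0 ≤ M) (hbd : ∀ f : L1, φ f ≤ M * posL1Norm f) :
    Lp ℝ ⊤ vol := (g0_memLp (φ := φ) hM hbd).toLp _

lemma gL_coe : ⇑(gL (φ := φ) hM hbd) =ᵐ[vol] g0 (φ := φ) hM hbd :=
  MemLp.coeFn_toLp _

lemma gL_nonneg : ∀ᵐ x ∂vol, 0 ≤ (gL (φ := φ) hM hbd) x := by
  filter_upwards [gL_coe (φ := φ) hM hbd] with x hx
  rw [hx]; exact g0_nonneg hM hbd x

lemma gL_repr (f : L1) : φ f = ∫ x, (gL (φ := φ) hM hbd) x * f x := by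
  rw [phi_repr hM hbd f]
  refine integral_congr_ae ?_
  filter_upwards [gL_coe (φ := φ) hM hbd] with x hx
  rw [hx]

lemma g0_ae_le_norm : ∀ᵐ x ∂vol, g0 (φ := φ) hM hbd x ≤ ‖gL (φ := φ) hM hbd‖ := by
  filter_upwards [gL_coe (φ := φ) hM hbd, Lp_top_ae_le (gL (φ := φ) hM hbd)] with x h1 h2
  rw [h1, Real.norm_eq_abs, abs_of_nonneg (g0_nonneg hM hbd x)] at h2
  exact h2

lemma sup_mem_le (r : ℝ) (hr : r ∈ {r : ℝ | ∃ f : L1, posL1Norm f ≤ 1 ∧ r = φ f}) :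
    r ≤ ‖gL (φ := φ) hM hbd‖ := by
  obtain ⟨f, hf1, rfl⟩ := hr
  set G := g0 (φ := φ) hM hbd with hG
  set N := ‖gL (φ := φ) hM hbd‖ with hN
  have hN0 : 0 ≤ N := norm_nonneg _
  have hstep1 : φ f ≤ ∫ x, G x * max (f x) 0 ∂vol := by
    rw [phi_repr hM hbd f]
    refine integral_mono (integrable_g0_mul hM hbd f)
      ((integrable_max f).bdd_mul (g0_meas hM hbd).aestronglyMeasurable
        (g0_bound hM hbd)) fun x => ?_
    exact mul_le_mul_of_nonneg_left (le_max_left _ _) (g0_nonneg hM hbd x)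
  have hstep2 : ∫ x, G x * max (f x) 0 ∂vol ≤ ∫ x, N * max (f x) 0 ∂vol := by
    refine integral_mono_ae
      ((integrable_max f).bdd_mul (g0_meas hM hbd).aestronglyMeasurable (g0_bound hM hbd))
      ((integrable_max f).const_mul N) ?_
    filter_upwards [g0_ae_le_norm (φ := φ) hM hbd] with x hx
    exact mul_le_mul_of_nonneg_right hx (le_max_right _ _)
  have hstep3 : ∫ x, N * max (f x) 0 ∂vol = N * posL1Norm f := integral_const_mul N _
  calc φ f ≤ N * posL1Norm f := by linarith
    _ ≤ N * 1 := mul_le_mul_of_nonneg_left hf1 hN0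
    _ = N := mul_one N

lemma zero_mem_sup : (0:ℝ) ∈ {r : ℝ | ∃ f : L1, posL1Norm f ≤ 1 ∧ r = φ f} := by
  refine ⟨0, ?_, (map_zero φ).symm⟩
  have : posL1Norm (0 : L1) = 0 := by
    rw [posL1Norm, ← integral_zero ℝ ℝ]
    refine integral_congr_ae ?_
    filter_upwards [Lp.coeFn_zero ℝ 1 vol] with x hx
    rw [hx]; simp
  rw [this]; exact zero_le_one

lemma sup_eq_norm :
    sSup {r : ℝ | ∃ f : L1, posL1Norm f ≤ 1 ∧ r = φ f} = ‖gL (φ := φ) hM hbd‖ := by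
  set S := {r : ℝ | ∃ f : L1, posL1Norm f ≤ 1 ∧ r = φ f} with hS
  set G := g0 (φ := φ) hM hbd with hG
  set N := ‖gL (φ := φ) hM hbd‖ with hN
  have hbdd : BddAbove S := ⟨N, fun r hr => sup_mem_le hM hbd r hr⟩
  have hne : S.Nonempty := ⟨0, zero_mem_sup (φ := φ)⟩
  have hsup0 : 0 ≤ sSup S := le_csSup hbdd (zero_mem_sup (φ := φ))
  refine le_antisymm (Real.sSup_le (fun r hr => sup_mem_le hM hbd r hr) (norm_nonneg _)) ?_
  refine _root_.le_of_forall_pos_le_add fun ε hε => ?_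
  rcases le_or_gt (N - ε) 0 with hc | hc
  · linarith
  -- the set where G is large has positive measure
  have hAm : MeasurableSet {x : ℝ | N - ε < G x} :=
    measurableSet_lt measurable_const (g0_meas hM hbd)
  have hA : vol {x : ℝ | N - ε < G x} ≠ 0 := by
    intro h0
    have hae : ∀ᵐ x ∂vol, ‖G x‖ ≤ N - ε := by
      rw [ae_iff]
      refine measure_mono_null (fun x hx => ?_) h0
      simp only [mem_setOf_eq, not_le, Real.norm_eq_abs] at hx ⊢
      rwa [abs_of_nonneg (g0_nonneg hM hbd x)] at hx
    have hle := eLpNorm_le_of_ae_bound (p := (⊤ : ℝ≥0∞)) (μ := vol) hae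
    simp only [ENNReal.toReal_top, GroupWithZero.inv_zero, ENNReal.rpow_zero, one_mul] at hle
    have h2 : eLpNorm (⇑(gL (φ := φ) hM hbd)) ⊤ vol = eLpNorm G ⊤ vol :=
      eLpNorm_congr_ae (gL_coe (φ := φ) hM hbd)
    have hNe : N = (eLpNorm G ⊤ vol).toReal := by rw [hN, Lp.norm_def, h2]
    have hfin : (eLpNorm G ⊤ vol).toReal ≤ N - ε :=
      le_trans (ENNReal.toReal_mono ofReal_ne_top hle) (le_of_eq (toReal_ofReal hc.le))
    linarith
  obtain ⟨n, hn⟩ : ∃ n : ℕ, vol ({x : ℝ | N - ε < G x} ∩ Ioc (-(n:ℝ)) n) ≠ 0 := by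
    by_contra hcon
    push_neg at hcon
    refine hA ?_
    have : vol {x : ℝ | N - ε < G x} = vol (⋃ n : ℕ, {x : ℝ | N - ε < G x} ∩ Ioc (-(n:ℝ)) n) := by
      rw [iUnion_inter_Ioc]
    rw [this]
    exact measure_iUnion_null hcon
  set B := {x : ℝ | N - ε < G x} ∩ Ioc (-(n:ℝ)) n with hB
  have hBm : MeasurableSet B := hAm.inter measurableSet_Ioc
  have hBfin : vol B ≠ ∞ := vol_sub_ne_top inter_subset_right (vol_Ioc_ne_top _ _)
  set c := (vol B).toReal with hc'
  have hc0 : 0 < c := ENNReal.toReal_pos hn hBfin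
  set f : L1 := c⁻¹ • ind hBm hBfin with hf
  have hf1 : posL1Norm f = 1 := by
    rw [hf, posL1Norm_smul_ind (by positivity) hBm hBfin, ← hc']
    field_simp
  have hφf : N - ε ≤ φ f := by
    have h1 : φ f = c⁻¹ * ((SF hM hbd (φ := φ)).measure B).toReal := by
      rw [hf, _root_.map_smul, smul_eq_mul, key hM hbd hBm hBfin]
    have h2 : ((SF hM hbd (φ := φ)).measure B).toReal = ∫ x in B, G x ∂vol :=
      (setIntegral_g0 hM hbd hBm hBfin).symm
    have h3 : (N - ε) * c ≤ ∫ x in B, G x ∂vol := by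
      have hint : IntegrableOn G B vol := by
        refine Integrable.mono' (g := fun _ => M) ?_
          (g0_meas hM hbd).aestronglyMeasurable.restrict
          (ae_restrict_of_ae (g0_bound hM hbd))
        exact integrableOn_const hBfin
      have := setIntegral_mono_on (integrableOn_const hBfin)
        hint hBm (fun x hx => le_of_lt (hx.1 : N - ε < G x))
      rwa [setIntegral_const, smul_eq_mul, mul_comm] at this
    calc N - ε = c⁻¹ * ((N - ε) * c) := by field_simp
      _ ≤ c⁻¹ * ∫ x in B, G x ∂vol := mul_le_mul_of_nonneg_left h3 (by positivity)
      _ = φ f := by rw [h1, h2]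
  have : N - ε ≤ sSup S := le_trans hφf (le_csSup hbdd ⟨f, le_of_eq hf1, rfl⟩)
  linarith

end Main


lemma uniq (hM : 0 ≤ M) (hbd : ∀ f : L1, φ f ≤ M * posL1Norm f) (g' : Lp ℝ ⊤ vol)
    (hrep' : ∀ f : L1, φ f = ∫ x, g' x * f x) : g' = gL (φ := φ) hM hbd := by
  refine Lp.ext ?_
  have hbV : ∀ (h : Lp ℝ ⊤ vol) (s : Set ℝ), MeasurableSet s → vol s < ∞ →
      IntegrableOn (⇑h) s vol := by
    intro h s hs hμs
    refine Integrable.mono' (g := fun _ => ‖h‖) (integrableOn_const hμs.ne)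
      (Lp.aestronglyMeasurable h).restrict (ae_restrict_of_ae (Lp_top_ae_le h))
  refine ae_eq_of_forall_setIntegral_eq_of_sigmaFinite (fun s hs hμs => hbV g' s hs hμs)
    (fun s hs hμs => hbV _ s hs hμs) fun s hs hμs => ?_
  have h1 := hrep' (ind hs hμs.ne)
  have h2 := gL_repr hM hbd (φ := φ) (ind hs hμs.ne)
  rw [mul_ind_integral (⇑g') hs hμs.ne] at h1
  rw [mul_ind_integral (⇑(gL (φ := φ) hM hbd)) hs hμs.ne] at h2
  rw [← h1, ← h2]

end DualAsym

open DualAsym in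
/-- The dual cone of `(L¹(ℝ), ‖·|_{1,+})` is (isometrically) the cone
`L^∞₊(ℝ)`: every linear functional `φ` with `φ f ≤ M ‖f|_{1,+}` is represented
by a unique a.e. nonnegative `g ∈ L^∞`, and the dual conic norm of `φ` equals
`‖g‖_∞`. -/
theorem dual_of_asymmetric_L1 (φ : Lp ℝ 1 (volume : Measure ℝ) →ₗ[ℝ] ℝ)
    (M : ℝ) (hM : 0 ≤ M)
    (hbd : ∀ f : Lp ℝ 1 (volume : Measure ℝ), φ f ≤ M * posL1Norm f) :
    ∃! g : Lp ℝ ⊤ (volume : Measure ℝ),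
      (∀ᵐ x ∂(volume : Measure ℝ), 0 ≤ g x) ∧
      (∀ f : Lp ℝ 1 (volume : Measure ℝ), φ f = ∫ x, g x * f x) ∧
      sSup {r : ℝ | ∃ f : Lp ℝ 1 (volume : Measure ℝ), posL1Norm f ≤ 1 ∧ r = φ f} = ‖g‖ := by
  refine ⟨gL (φ := φ) hM hbd,
    ⟨gL_nonneg hM hbd, fun f => gL_repr hM hbd f, sup_eq_norm hM hbd⟩, ?_⟩
  rintro g' ⟨-, h2, -⟩
  exact uniq hM hbd g' h2
end

section
/- Let (X,D) be a metric space with base point x₀, L = Lip₀(X,D), and P ⊆ L a cone such that every φ ∈ L decomposes as φ = φ₁ - φ₂ with φ₁,φ₂ ∈ P and max{‖φ₁‖_L, ‖φ₂‖_L} ≤ ‖φ‖_L. Define the P-asymmetrization D_P(x,y) = sup{φ(y) - φ(x) : φ ∈ P, ‖φ‖_L ≤ 1}. Then the symmetrization D_P^s(x,y) = D_P(x,y) + D_P(y,x) satisfies D(x,y) ≤ D_P^s(x,y) ≤ 2D(x,y) for all x,y ∈ X; in particular D_P^s and D are bi-Lipschitz equivalent. -/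
/-- The Lipschitz norm of a real-valued function on a metric space. -/
noncomputable def lipNorm {X : Type*} [MetricSpace X] (φ : X → ℝ) : ℝ :=
  sInf {K : ℝ | 0 ≤ K ∧ ∀ x y, |φ x - φ y| ≤ K * dist x y}

/-- The `P`-asymmetrization of the distance of a metric space. -/
noncomputable def DP {X : Type*} [MetricSpace X] (P : Set (X → ℝ)) (x y : X) : ℝ :=
  sSup {r : ℝ | ∃ φ ∈ P, lipNorm φ ≤ 1 ∧ r = φ y - φ x}

lemma lipNorm_bddBelow {X : Type*} [MetricSpace X] (φ : X → ℝ) :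
    BddBelow {K : ℝ | 0 ≤ K ∧ ∀ x y, |φ x - φ y| ≤ K * dist x y} :=
  ⟨0, fun _ hK => hK.1⟩

lemma lipNorm_nonneg {X : Type*} [MetricSpace X] (φ : X → ℝ)
    (h : ∃ K : ℝ, 0 ≤ K ∧ ∀ x y, |φ x - φ y| ≤ K * dist x y) :
    0 ≤ lipNorm φ :=
  le_csInf ⟨_, h.choose_spec⟩ fun _ hK => hK.1

lemma lipNorm_spec {X : Type*} [MetricSpace X] (φ : X → ℝ)
    (h : ∃ K : ℝ, 0 ≤ K ∧ ∀ x y, |φ x - φ y| ≤ K * dist x y) :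
    ∀ x y, |φ x - φ y| ≤ lipNorm φ * dist x y := by
  intro x y
  rcases eq_or_ne x y with rfl | hxy
  · simp
  · have hd : 0 < dist x y := dist_pos.2 hxy
    have hlb : |φ x - φ y| / dist x y ≤ lipNorm φ := by
      refine le_csInf ⟨_, h.choose_spec⟩ fun K hK => ?_
      rw [div_le_iff₀ hd]
      exact hK.2 x y
    calc |φ x - φ y| = |φ x - φ y| / dist x y * dist x y := by field_simp
      _ ≤ lipNorm φ * dist x y := by
          exact mul_le_mul_of_nonneg_right hlb hd.le

lemma lipNorm_le {X : Type*} [MetricSpace X] (φ : X → ℝ) {K : ℝ}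
    (hK : 0 ≤ K) (h : ∀ x y, |φ x - φ y| ≤ K * dist x y) :
    lipNorm φ ≤ K :=
  csInf_le (lipNorm_bddBelow φ) ⟨hK, h⟩

/-- If `P ⊆ Lip₀(X,D)` is a cone with the decomposition property, then the
symmetrization `D_P^s` of the `P`-asymmetrization satisfies
`D ≤ D_P^s ≤ 2 D`; in particular `D_P^s` and `D` are bi-Lipschitz
equivalent. -/
theorem P_asymmetrization_symmetrization_equiv
    {X : Type*} [MetricSpace X] (x₀ : X) (P : Set (X → ℝ))
    (hP0 : ∀ φ ∈ P, φ x₀ = 0)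
    (hPlip : ∀ φ ∈ P, ∃ K : ℝ, 0 ≤ K ∧ ∀ x y, |φ x - φ y| ≤ K * dist x y)
    (hPadd : ∀ φ ∈ P, ∀ ψ ∈ P, φ + ψ ∈ P)
    (hPsmul : ∀ φ ∈ P, ∀ c : ℝ, 0 ≤ c → c • φ ∈ P)
    (hdec : ∀ φ : X → ℝ, φ x₀ = 0 →
      (∃ K : ℝ, 0 ≤ K ∧ ∀ x y, |φ x - φ y| ≤ K * dist x y) →
      ∃ φ₁ ∈ P, ∃ φ₂ ∈ P, φ = φ₁ - φ₂ ∧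
        max (lipNorm φ₁) (lipNorm φ₂) ≤ lipNorm φ) :
    ∀ x y : X, dist x y ≤ DP P x y + DP P y x ∧
      DP P x y + DP P y x ≤ 2 * dist x y := by
  intro x y
  -- every element of the defining set of `DP P a b` is at most `dist a b`
  have hub : ∀ a b : X, ∀ r ∈ {r : ℝ | ∃ φ ∈ P, lipNorm φ ≤ 1 ∧ r = φ b - φ a},
      r ≤ dist a b := by
    intro a b r hr
    obtain ⟨φ, hφP, hφ1, rfl⟩ := hr
    calc φ b - φ a ≤ |φ b - φ a| := le_abs_self _
      _ ≤ lipNorm φ * dist b a := lipNorm_spec φ (hPlip φ hφP) b a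
      _ ≤ 1 * dist b a := mul_le_mul_of_nonneg_right hφ1 dist_nonneg
      _ = dist a b := by rw [one_mul, dist_comm]
  have hDPle : ∀ a b : X, DP P a b ≤ dist a b := fun a b =>
    Real.sSup_le (hub a b) dist_nonneg
  have hbdd : ∀ a b : X,
      BddAbove {r : ℝ | ∃ φ ∈ P, lipNorm φ ≤ 1 ∧ r = φ b - φ a} :=
    fun a b => ⟨dist a b, hub a b⟩
  refine ⟨?_, ?_⟩
  · -- lower bound: use φ z = dist z x - dist x₀ x
    set φ : X → ℝ := fun z => dist z x - dist x₀ x with hφdef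
    have hφ0 : φ x₀ = 0 := by simp [hφdef]
    have hφlip : ∀ a b : X, |φ a - φ b| ≤ 1 * dist a b := by
      intro a b
      simp only [hφdef]
      rw [one_mul]
      have := abs_dist_sub_le a b x
      simpa [sub_sub_sub_cancel_right] using this
    obtain ⟨φ₁, hφ₁P, φ₂, hφ₂P, hφeq, hmax⟩ :=
      hdec φ hφ0 ⟨1, zero_le_one, hφlip⟩
    have hφN : lipNorm φ ≤ 1 := lipNorm_le φ zero_le_one hφlip
    have h1 : lipNorm φ₁ ≤ 1 := le_trans (le_trans (le_max_left _ _) hmax) hφN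
    have h2 : lipNorm φ₂ ≤ 1 := le_trans (le_trans (le_max_right _ _) hmax) hφN
    have hm1 : φ₁ y - φ₁ x ≤ DP P x y :=
      le_csSup (hbdd x y) ⟨φ₁, hφ₁P, h1, rfl⟩
    have hm2 : φ₂ x - φ₂ y ≤ DP P y x :=
      le_csSup (hbdd y x) ⟨φ₂, hφ₂P, h2, rfl⟩
    have hval : φ y - φ x = dist x y := by
      simp [hφdef, dist_comm]
    have : dist x y = (φ₁ y - φ₁ x) + (φ₂ x - φ₂ y) := by
      have h1 := congrFun hφeq y
      have h2 := congrFun hφeq x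
      simp only [Pi.sub_apply] at h1 h2
      rw [← hval, h1, h2]; ring
    rw [this]
    exact add_le_add hm1 hm2
  · have := add_le_add (hDPle x y) (hDPle y x)
    rw [dist_comm y x] at this
    linarith
end

section
/- The map T : (ℒ^∞₊(ℝ), ‖·‖_∞) → (SLip₀(ℝ,u), ‖·|_S) defined by Tg(x) = ∫₀ˣ g dλ is a surjective isometric isomorphism of normed cones: T is additive, positively homogeneous, bijective, and ‖Tg|_S = ‖g‖_∞ for every g ∈ ℒ^∞₊(ℝ). -/
open MeasureTheory

/-- The semi-Lipschitz constant of a function on `(ℝ, u)`. -/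
noncomputable def sConst (f : ℝ → ℝ) : ℝ :=
  sInf {L : ℝ | 0 ≤ L ∧ ∀ x y, f x - f y ≤ L * max (x - y) 0}

/-- The map `T g = (x ↦ ∫₀ˣ g)`. -/
noncomputable def Tmap (g : ℝ → ℝ) : ℝ → ℝ := fun x => ∫ t in (0 : ℝ)..x, g t

open Set Filter Topology ENNReal NNReal

namespace TmapProof


lemma loc_int {g : ℝ → ℝ} (hg : MemLp g ⊤ (volume : Measure ℝ)) :
    LocallyIntegrable g (volume : Measure ℝ) :=
  hg.locallyIntegrable le_top

lemma ii {g : ℝ → ℝ} (hg : LocallyIntegrable g (volume : Measure ℝ)) (a b : ℝ) :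
    IntervalIntegrable g volume a b :=
  (hg.integrableOn_isCompact isCompact_uIcc).intervalIntegrable

lemma Tmap_sub {g : ℝ → ℝ} (hg : LocallyIntegrable g (volume : Measure ℝ)) (a b : ℝ) :
    Tmap g b - Tmap g a = ∫ t in a..b, g t := by
  have := intervalIntegral.integral_add_adjacent_intervals (ii hg 0 a) (ii hg a b)
  simp only [Tmap]
  linarith

lemma ball_int {g : ℝ → ℝ} (hg : LocallyIntegrable g (volume : Measure ℝ)) (x r : ℝ)
    (hr : 0 ≤ r) :
    ∫ y in Metric.closedBall x r, g y = Tmap g (x + r) - Tmap g (x - r) := by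
  rw [Tmap_sub hg, Real.closedBall_eq_Icc, MeasureTheory.integral_Icc_eq_integral_Ioc,
    intervalIntegral.integral_of_le (by linarith)]

lemma avg_tendsto {g : ℝ → ℝ} (hg : LocallyIntegrable g (volume : Measure ℝ)) :
    ∀ᵐ x ∂(volume : Measure ℝ),
      Tendsto (fun r => ⨍ y in Metric.closedBall x r, g y) (𝓝[>] 0) (𝓝 (g x)) := by
  filter_upwards [IsUnifLocDoublingMeasure.ae_tendsto_average (μ := (volume : Measure ℝ)) hg 1]
    with x hx
  exact hx (fun r => x) id tendsto_id (by
    filter_upwards [self_mem_nhdsWithin] with r (hr : 0 < r)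
    simp [Metric.mem_closedBall, hr.le])

lemma ae_le_of_slope {g : ℝ → ℝ} (hg : LocallyIntegrable g (volume : Measure ℝ)) {L : ℝ}
    (h : ∀ x y, Tmap g x - Tmap g y ≤ L * max (x - y) 0) :
    ∀ᵐ x ∂(volume : Measure ℝ), g x ≤ L := by
  filter_upwards [avg_tendsto hg] with x hx
  refine le_of_tendsto hx ?_
  filter_upwards [self_mem_nhdsWithin] with r (hr : 0 < r)
  have hvol : (volume (Metric.closedBall x r)).toReal = 2 * r := by
    rw [Real.volume_closedBall, ENNReal.toReal_ofReal (by linarith)]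
  have hint : ∫ y in Metric.closedBall x r, g y ≤ L * (2 * r) := by
    rw [ball_int hg x r hr.le]
    have := h (x + r) (x - r)
    have hmax : max ((x + r) - (x - r)) 0 = 2 * r := by
      rw [max_eq_left (by linarith)]; ring
    rw [hmax] at this; linarith
  rw [average_eq, smul_eq_mul, measureReal_restrict_apply_univ, measureReal_def, hvol]
  rw [inv_mul_le_iff₀ (by linarith)]
  linarith [hint]

lemma ae_eq_of_Tmap_eq {g g' : ℝ → ℝ} (hg : LocallyIntegrable g (volume : Measure ℝ))
    (hg' : LocallyIntegrable g' (volume : Measure ℝ)) (h : Tmap g = Tmap g') :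
    g =ᵐ[(volume : Measure ℝ)] g' := by
  filter_upwards [avg_tendsto hg, avg_tendsto hg'] with x hx hx'
  have : ∀ᶠ r in 𝓝[>] (0:ℝ),
      (⨍ y in Metric.closedBall x r, g y) = ⨍ y in Metric.closedBall x r, g' y := by
    filter_upwards [self_mem_nhdsWithin] with r (hr : 0 < r)
    rw [average_eq, average_eq, ball_int hg x r hr.le, ball_int hg' x r hr.le, h]
  exact tendsto_nhds_unique (hx.congr' this) hx'

lemma ae_g_le {g : ℝ → ℝ} (hg : MemLp g ⊤ (volume : Measure ℝ)) :
    ∀ᵐ y ∂(volume : Measure ℝ), g y ≤ (eLpNorm g ⊤ (volume : Measure ℝ)).toReal := by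
  have hfin : eLpNormEssSup g (volume : Measure ℝ) ≠ ⊤ := by
    have := hg.2; rw [eLpNorm_exponent_top] at this; exact this.ne
  filter_upwards [ae_le_eLpNormEssSup (f := g) (μ := (volume : Measure ℝ))] with y hy
  calc g y ≤ ‖g y‖ := le_abs_self _
    _ = ((‖g y‖₊ : ℝ≥0∞)).toReal := by simp
    _ ≤ (eLpNormEssSup g (volume : Measure ℝ)).toReal := ENNReal.toReal_mono hfin hy
    _ = _ := by rw [eLpNorm_exponent_top]

lemma slope_bound {g : ℝ → ℝ} (hg : MemLp g ⊤ (volume : Measure ℝ))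
    (hpos : ∀ᵐ x ∂(volume : Measure ℝ), 0 ≤ g x) (x y : ℝ) :
    Tmap g x - Tmap g y ≤ (eLpNorm g ⊤ (volume : Measure ℝ)).toReal * max (x - y) 0 := by
  set M := (eLpNorm g ⊤ (volume : Measure ℝ)).toReal with hM
  have hM0 : 0 ≤ M := ENNReal.toReal_nonneg
  have hli := loc_int hg
  rcases le_total y x with hxy | hxy
  · rw [max_eq_left (by linarith), Tmap_sub hli y x]
    calc (∫ t in y..x, g t) ≤ ∫ t in y..x, M := by
          refine intervalIntegral.integral_mono_ae hxy (ii hli y x)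
            (intervalIntegrable_const) (ae_g_le hg)
      _ = M * (x - y) := by simp [mul_comm]
  · rw [max_eq_right (by linarith)]
    have h0 : (0:ℝ) ≤ ∫ t in x..y, g t :=
      intervalIntegral.integral_nonneg_of_ae hxy (by filter_upwards [hpos] with t ht; exact ht)
    have := Tmap_sub hli x y
    simp only [mul_zero]
    linarith

lemma eLp_le_of_slope {g : ℝ → ℝ} (hg : MemLp g ⊤ (volume : Measure ℝ))
    (hpos : ∀ᵐ x ∂(volume : Measure ℝ), 0 ≤ g x) {L : ℝ} (hL0 : 0 ≤ L)
    (h : ∀ x y, Tmap g x - Tmap g y ≤ L * max (x - y) 0) :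
    (eLpNorm g ⊤ (volume : Measure ℝ)).toReal ≤ L := by
  have hb : ∀ᵐ x ∂(volume : Measure ℝ), ‖g x‖ ≤ L := by
    filter_upwards [hpos, ae_le_of_slope (loc_int hg) h] with x h1 h2
    rw [Real.norm_eq_abs, abs_of_nonneg h1]; exact h2
  have := eLpNormEssSup_le_of_ae_bound (μ := (volume : Measure ℝ)) hb
  rw [← eLpNorm_exponent_top (μ := (volume : Measure ℝ))] at this
  calc (eLpNorm g ⊤ (volume : Measure ℝ)).toReal ≤ (ENNReal.ofReal L).toReal :=
        ENNReal.toReal_mono ENNReal.ofReal_ne_top this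
    _ = L := ENNReal.toReal_ofReal hL0


lemma surj_aux (f : ℝ → ℝ) (hf0 : f 0 = 0) (L : ℝ) (hL0 : 0 ≤ L)
    (hL : ∀ x y, f x - f y ≤ L * max (x - y) 0) :
    ∃ g : ℝ → ℝ, MemLp g ⊤ (volume : Measure ℝ) ∧
      (∀ᵐ x ∂(volume : Measure ℝ), 0 ≤ g x) ∧ Tmap g = f := by
  have hmono : Monotone f := by
    intro x y hxy
    have := hL x y
    rw [max_eq_right (by linarith)] at this
    linarith
  have hincr : ∀ x y, x ≤ y → f y - f x ≤ L * (y - x) := by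
    intro x y hxy
    have := hL y x
    rwa [max_eq_left (by linarith)] at this
  have hcont : Continuous f := by
    have : LipschitzWith ⟨L, hL0⟩ f := by
      apply LipschitzWith.of_dist_le_mul
      intro x y
      rcases le_total x y with h | h
      · rw [Real.dist_eq, Real.dist_eq, abs_of_nonpos (by linarith [hmono h]),
          abs_of_nonpos (by linarith)]
        have := hincr x y h
        show _ ≤ L * _
        linarith
      · rw [Real.dist_eq, Real.dist_eq, abs_of_nonneg (by linarith [hmono h]),
          abs_of_nonneg (by linarith)]
        have := hincr y x h
        show _ ≤ L * _
        linarith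
    exact this.continuous
  set f2 : ℝ → ℝ := fun x => L * x - f x with hf2
  have hmono2 : Monotone f2 := by
    intro x y hxy
    have := hincr x y hxy
    simp only [hf2]
    nlinarith
  set F : StieltjesFunction ℝ :=
    ⟨f, hmono, fun x => (hcont.continuousAt).continuousWithinAt⟩ with hF
  set F2 : StieltjesFunction ℝ :=
    ⟨f2, hmono2, fun x => ((continuous_const.mul continuous_id).sub hcont).continuousAt.continuousWithinAt⟩ with hF2
  haveI : IsLocallyFiniteMeasure (F.measure + F2.measure) := by
    refine ⟨fun x => ?_⟩
    obtain ⟨s, hs, h1⟩ := F.measure.finiteAt_nhds x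
    obtain ⟨t, ht, h2⟩ := F2.measure.finiteAt_nhds x
    refine ⟨s ∩ t, inter_mem hs ht, ?_⟩
    rw [Measure.add_apply]
    exact ENNReal.add_lt_top.2 ⟨lt_of_le_of_lt (measure_mono inter_subset_left) h1,
      lt_of_le_of_lt (measure_mono inter_subset_right) h2⟩
  have key : F.measure + F2.measure = (L.toNNReal : ℝ≥0∞) • (volume : Measure ℝ) := by
    refine Measure.ext_of_Ioc _ _ (fun a b hab => ?_)
    rw [Measure.add_apply, F.measure_Ioc, F2.measure_Ioc, Measure.smul_apply,
      Real.volume_Ioc, smul_eq_mul]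
    have h1 : (F : ℝ → ℝ) = f := rfl
    have h2 : (F2 : ℝ → ℝ) = f2 := rfl
    rw [h1, h2]
    rw [← ENNReal.ofReal_add (by linarith [hmono hab.le]) (by simp only [hf2]; nlinarith [hincr a b hab.le])]
    rw [show ((L.toNNReal : ℝ≥0∞)) = ENNReal.ofReal L from rfl, ← ENNReal.ofReal_mul hL0]
    congr 1
    simp only [hf2]
    ring
  have hle : F.measure ≤ (L.toNNReal : ℝ≥0∞) • (volume : Measure ℝ) := by
    rw [← key]; exact Measure.le_add_right le_rfl
  have hac : F.measure ≪ (volume : Measure ℝ) := by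
    refine Measure.AbsolutelyContinuous.mk fun s hs h0 => ?_
    refine le_antisymm ?_ (zero_le (a := F.measure s))
    calc F.measure s ≤ ((L.toNNReal : ℝ≥0∞) • (volume : Measure ℝ)) s := hle s
      _ = 0 := by rw [Measure.smul_apply, h0, smul_eq_mul, mul_zero]
  have hbound : ∀ᵐ x ∂(volume : Measure ℝ),
      F.measure.rnDeriv volume x ≤ (L.toNNReal : ℝ≥0∞) := by
    have hadd := Measure.rnDeriv_add' F.measure F2.measure (volume : Measure ℝ)
    have hsmul := Measure.rnDeriv_smul_left' (volume : Measure ℝ) (volume : Measure ℝ) L.toNNReal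
    rw [ENNReal.smul_def] at hsmul
    have hself := Measure.rnDeriv_self (volume : Measure ℝ)
    rw [key] at hadd
    filter_upwards [hadd, hsmul, hself] with x h1 h2 h3
    have : F.measure.rnDeriv volume x + F2.measure.rnDeriv volume x = (L.toNNReal : ℝ≥0∞) := by
      rw [← Pi.add_apply, ← h1, h2, Pi.smul_apply, h3, ENNReal.smul_def, smul_eq_mul, mul_one]
    calc F.measure.rnDeriv volume x ≤ _ + F2.measure.rnDeriv volume x := le_self_add
      _ = _ := this
  refine ⟨fun x => (F.measure.rnDeriv volume x).toReal, ?_, ?_, ?_⟩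
  · refine memLp_top_of_bound
      ((Measure.measurable_rnDeriv _ _).ennreal_toReal.aestronglyMeasurable) L ?_
    filter_upwards [hbound] with x hx
    rw [Real.norm_eq_abs, abs_of_nonneg ENNReal.toReal_nonneg]
    calc (F.measure.rnDeriv volume x).toReal ≤ ((L.toNNReal : ℝ≥0∞)).toReal :=
          ENNReal.toReal_mono ENNReal.coe_ne_top hx
      _ = L := by simp [Real.coe_toNNReal _ hL0]
  · exact Eventually.of_forall fun x => ENNReal.toReal_nonneg
  · funext x
    have hlt := Measure.rnDeriv_lt_top F.measure (volume : Measure ℝ)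
    have hint : ∀ a b : ℝ, a ≤ b →
        ∫ t in Ioc a b, (F.measure.rnDeriv volume t).toReal = f b - f a := by
      intro a b hab
      rw [integral_toReal ((Measure.measurable_rnDeriv _ _).aemeasurable.restrict)
        (ae_restrict_of_ae hlt), Measure.setLIntegral_rnDeriv hac,
        F.measure_Ioc, ENNReal.toReal_ofReal (by linarith [hmono hab])]
    simp only [Tmap]
    rcases le_total 0 x with hx | hx
    · rw [intervalIntegral.integral_of_le hx, hint 0 x hx, hf0, sub_zero]
    · rw [intervalIntegral.integral_symm, intervalIntegral.integral_of_le hx, hint x 0 hx, hf0]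
      ring

end TmapProof

/-- The map `T : (L^∞₊(ℝ), ‖·‖_∞) → (SLip₀(ℝ,u), ‖·|_S)`, `Tg(x) = ∫₀ˣ g`, is
an additive, positively homogeneous, bijective isometry of normed cones. -/
theorem T_isometric_isomorphism :
    -- T maps into SLip₀(ℝ,u) and is an isometry
    (∀ g : ℝ → ℝ, MemLp g ⊤ (volume : Measure ℝ) →
      (∀ᵐ x ∂(volume : Measure ℝ), 0 ≤ g x) →
      Tmap g 0 = 0 ∧
      (∃ L : ℝ, 0 ≤ L ∧ ∀ x y, Tmap g x - Tmap g y ≤ L * max (x - y) 0) ∧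
      sConst (Tmap g) = (eLpNorm g ⊤ (volume : Measure ℝ)).toReal) ∧
    -- additivity
    (∀ g g' : ℝ → ℝ, MemLp g ⊤ (volume : Measure ℝ) →
      MemLp g' ⊤ (volume : Measure ℝ) →
      (∀ᵐ x ∂(volume : Measure ℝ), 0 ≤ g x) →
      (∀ᵐ x ∂(volume : Measure ℝ), 0 ≤ g' x) →
      Tmap (g + g') = Tmap g + Tmap g') ∧
    -- positive homogeneity
    (∀ (c : ℝ), 0 ≤ c → ∀ g : ℝ → ℝ, MemLp g ⊤ (volume : Measure ℝ) →
      (∀ᵐ x ∂(volume : Measure ℝ), 0 ≤ g x) →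
      Tmap (c • g) = c • Tmap g) ∧
    -- injectivity (up to a.e. equality, i.e. as elements of L^∞)
    (∀ g g' : ℝ → ℝ, MemLp g ⊤ (volume : Measure ℝ) →
      MemLp g' ⊤ (volume : Measure ℝ) →
      (∀ᵐ x ∂(volume : Measure ℝ), 0 ≤ g x) →
      (∀ᵐ x ∂(volume : Measure ℝ), 0 ≤ g' x) →
      Tmap g = Tmap g' → g =ᵐ[(volume : Measure ℝ)] g') ∧
    -- surjectivity onto SLip₀(ℝ,u)
    (∀ f : ℝ → ℝ, f 0 = 0 →
      (∃ L : ℝ, 0 ≤ L ∧ ∀ x y, f x - f y ≤ L * max (x - y) 0) →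
      ∃ g : ℝ → ℝ, MemLp g ⊤ (volume : Measure ℝ) ∧
        (∀ᵐ x ∂(volume : Measure ℝ), 0 ≤ g x) ∧ Tmap g = f) := by
  refine ⟨?_, ?_, ?_, ?_, ?_⟩
  · intro g hg hpos
    have h0 : Tmap g 0 = 0 := by simp [Tmap]
    set M := (eLpNorm g ⊤ (volume : Measure ℝ)).toReal with hM
    have hmem : M ∈ {L : ℝ | 0 ≤ L ∧ ∀ x y, Tmap g x - Tmap g y ≤ L * max (x - y) 0} :=
      ⟨ENNReal.toReal_nonneg, TmapProof.slope_bound hg hpos⟩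
    refine ⟨h0, ⟨M, hmem.1, hmem.2⟩, ?_⟩
    refine le_antisymm (csInf_le ⟨0, fun L hL => hL.1⟩ hmem)
      (le_csInf ⟨M, hmem⟩ fun L hL => TmapProof.eLp_le_of_slope hg hpos hL.1 hL.2)
  · intro g g' hg hg' _ _
    funext x
    simp only [Tmap, Pi.add_apply]
    exact intervalIntegral.integral_add (TmapProof.ii (TmapProof.loc_int hg) 0 x)
      (TmapProof.ii (TmapProof.loc_int hg') 0 x)
  · intro c _ g _ _
    funext x
    simp only [Tmap, Pi.smul_apply, smul_eq_mul]
    exact intervalIntegral.integral_const_mul c g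
  · intro g g' hg hg' _ _ h
    exact TmapProof.ae_eq_of_Tmap_eq (TmapProof.loc_int hg) (TmapProof.loc_int hg') h
  · rintro f hf0 ⟨L, hL0, hL⟩
    exact TmapProof.surj_aux f hf0 L hL0 hL
end

section
/- Let ℕ (including 0) carry the quasi-metric d(n,m) = 0 if m ∈ {0,n} and d(n,m) = 1 otherwise, with base point 0. Then the normed cone SLip₀(ℕ,d) of semi-Lipschitz functions vanishing at 0 is exactly the cone ℓ^∞₊(ℕ) of bounded nonnegative sequences (vanishing at index 0), and for every such y the semi-Lipschitz constant ‖y|_S equals sup_n y(n). -/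
/-- The quasi-metric on `ℕ` given by `d n m = 0` if `m ∈ {0, n}` and `1`
otherwise. -/
noncomputable def dNat (n m : ℕ) : ℝ := if m = 0 ∨ m = n then 0 else 1

/-- For `(ℕ, d)` with base point `0`, the semi-Lipschitz functions vanishing
at `0` are exactly the bounded nonnegative sequences, and the semi-Lipschitz
constant equals the supremum of the sequence. -/
theorem SLip_of_discrete_quasiMetric_nat (y : ℕ → ℝ) (h0 : y 0 = 0) :
    ((∃ L : ℝ, 0 ≤ L ∧ ∀ n m, y m - y n ≤ L * dNat n m) ↔
      ((∀ n, 0 ≤ y n) ∧ BddAbove (Set.range y))) ∧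
    ((∃ L : ℝ, 0 ≤ L ∧ ∀ n m, y m - y n ≤ L * dNat n m) →
      sInf {L : ℝ | 0 < L ∧ ∀ n m, y m - y n ≤ L * dNat n m} = ⨆ n, y n) := by
  have fwd : (∃ L : ℝ, 0 ≤ L ∧ ∀ n m, y m - y n ≤ L * dNat n m) →
      ((∀ n, 0 ≤ y n) ∧ BddAbove (Set.range y)) := by
    rintro ⟨L, hL, h⟩
    constructor
    · intro n
      have := h n 0
      simp [dNat, h0] at this
      linarith
    · refine ⟨L, ?_⟩
      rintro x ⟨m, rfl⟩
      rcases eq_or_ne m 0 with rfl | hm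
      · simpa [h0] using hL
      · have := h 0 m
        simp [dNat, hm] at this
        linarith
  refine ⟨⟨fwd, ?_⟩, ?_⟩
  · rintro ⟨hnn, L, hL⟩
    refine ⟨max L 0, le_max_right _ _, ?_⟩
    intro n m
    unfold dNat
    split_ifs with h
    · rcases h with rfl | rfl
      · have := hnn n; simp [h0]; linarith
      · simp
    · have h1 : y m ≤ L := hL ⟨m, rfl⟩
      have h2 := hnn n
      have h3 : L ≤ max L 0 := le_max_left _ _
      simp only [mul_one]
      linarith
  · intro hex
    obtain ⟨hnn, hbdd⟩ := fwd hex
    set S := ⨆ n, y n with hS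
    have hyS : ∀ m, y m ≤ S := fun m => le_ciSup hbdd m
    have hS0 : 0 ≤ S := h0 ▸ hyS 0
    have hmem : ∀ ε : ℝ, 0 < ε → (S + ε) ∈
        {L : ℝ | 0 < L ∧ ∀ n m, y m - y n ≤ L * dNat n m} := by
      intro ε hε
      refine ⟨by linarith, fun n m => ?_⟩
      unfold dNat
      split_ifs with h
      · rcases h with rfl | rfl
        · have := hnn n; simp [h0]; linarith
        · simp
      · have := hnn n
        have := hyS m
        simp only [mul_one]
        linarith
    have hne : {L : ℝ | 0 < L ∧ ∀ n m, y m - y n ≤ L * dNat n m}.Nonempty :=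
      ⟨S + 1, hmem 1 one_pos⟩
    have hbelow : ∀ L' ∈ {L : ℝ | 0 < L ∧ ∀ n m, y m - y n ≤ L * dNat n m}, S ≤ L' := by
      rintro L' ⟨hL'pos, hL'⟩
      refine ciSup_le fun m => ?_
      rcases eq_or_ne m 0 with rfl | hm
      · rw [h0]; exact hL'pos.le
      · have := hL' 0 m
        simp [dNat, hm, h0] at this
        linarith
    refine le_antisymm ?_ (le_csInf hne hbelow)
    have hbb : BddBelow {L : ℝ | 0 < L ∧ ∀ n m, y m - y n ≤ L * dNat n m} :=
      ⟨0, fun L' hL' => hL'.1.le⟩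
    refine le_of_forall_pos_le_add fun ε hε => ?_
    exact csInf_le hbb (hmem ε hε)
end
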